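/- arXiv:0905.4567 — 4 statements merged into one kernel-verified Lean document; each statement's English description precedes it below -/
import Mathlib

section
/- Probabilities of successive measurements on distinct qubits satisfy the exchange identity: for r ≠ q in QV, c, d ∈ {0,1}, and a quantum register Q ∈ H(QV), let p_{r,c} = ⟨Q, M_{r,c}†M_{r,c}Q⟩, p_{q,d} = ⟨Q, M_{q,d}†M_{q,d}Q⟩, and let Q_{r,c}, Q_{q,d} be the normalized post-measurement states (defined as M̄_{r,c}(Q), M̄_{q,d}(Q)); let s_{q,d} = ⟨Q_{r,c}, M_{q,d}†M_{q,d}Q_{r,c}⟩ and s_{r,c} = ⟨Q_{q,d}, M_{r,c}†M_{r,c}Q_{q,d}⟩. Then p_{r,c} · s_{q,d} = p_{q,d} · s_{r,c}. -/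
open Finset

variable {V : Type*} [DecidableEq V]

abbrev H (QV : Finset V) := EuclideanSpace ℂ (↥QV → Bool)

def extFun (QV : Finset V) (r : V) (c : Bool) (g : ↥(QV.erase r) → Bool) (x : ↥QV) : Bool :=
  if h : (x : V) = r then c else g ⟨x, Finset.mem_erase.mpr ⟨h, x.2⟩⟩

noncomputable def measL (QV : Finset V) (r : V) (c : Bool) :
    H QV →ₗ[ℂ] H (QV.erase r) where
  toFun Q := WithLp.toLp 2 (fun g => Q (extFun QV r c g))
  map_add' Q R := rfl
  map_smul' a Q := rfl

/-- The probability of observing outcome `c` when measuring qubit `r` in `Q`. -/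
noncomputable def prob (QV : Finset V) (r : V) (c : Bool) (Q : H QV) : ℝ :=
  (inner (𝕜 := ℂ) Q ((LinearMap.adjoint (measL QV r c)) (measL QV r c Q))).re

/-- The normalized destructive measurement. -/
noncomputable def nmeas (QV : Finset V) (r : V) (c : Bool) (Q : H QV) :
    H (QV.erase r) :=
  if prob QV r c Q = 0 then measL QV r c Q
  else ((Real.sqrt (prob QV r c Q) : ℂ))⁻¹ • measL QV r c Q


lemma prob_eq (QV : Finset V) (r : V) (c : Bool) (Q : H QV) :
    prob QV r c Q = ‖measL QV r c Q‖^2 := by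
  unfold prob
  rw [LinearMap.adjoint_inner_right]
  exact inner_self_eq_norm_sq (𝕜 := ℂ) _

lemma normSq_sum (QV : Finset V) (r : V) (c : Bool) (Q : H QV) :
    ‖measL QV r c Q‖^2 = ∑ g : ↥(QV.erase r) → Bool, ‖Q (extFun QV r c g)‖^2 := by
  rw [EuclideanSpace.norm_eq, Real.sq_sqrt (by positivity)]
  rfl

lemma key (QV : Finset V) (r q : V) (c d : Bool) (Q : H QV) :
    prob QV r c Q * prob (QV.erase r) q d (nmeas QV r c Q)
      = ‖measL (QV.erase r) q d (measL QV r c Q)‖^2 := by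
  by_cases h : prob QV r c Q = 0
  · have h0 : measL QV r c Q = 0 := by
      have := prob_eq QV r c Q
      rw [h] at this
      exact norm_eq_zero.mp (by nlinarith [norm_nonneg (measL QV r c Q)])
    rw [h, nmeas, if_pos h, h0, map_zero, zero_mul, norm_zero]
    ring
  · have hpos : 0 < prob QV r c Q := by
      rcases lt_or_eq_of_le (by rw [prob_eq]; positivity : (0:ℝ) ≤ prob QV r c Q) with h1 | h1
      · exact h1
      · exact absurd h1.symm h
    have hn : ‖measL QV r c Q‖ ≠ 0 := by
      intro h0
      rw [prob_eq] at hpos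
      simp [h0] at hpos
    rw [nmeas, if_neg h, prob_eq (QV.erase r) q d, map_smul, norm_smul, prob_eq QV r c Q,
      Real.sqrt_sq (norm_nonneg _)]
    have hc : ‖((‖measL QV r c Q‖ : ℂ))⁻¹‖ = ‖measL QV r c Q‖⁻¹ := by
      rw [norm_inv, Complex.norm_real, Real.norm_eq_abs, abs_of_nonneg (norm_nonneg _)]
    rw [hc]
    field_simp

lemma double_sum (QV : Finset V) (r q : V) (hrq : r ≠ q) (c d : Bool) (Q : H QV) :
    ‖measL (QV.erase r) q d (measL QV r c Q)‖^2
      = ‖measL (QV.erase q) r c (measL QV q d Q)‖^2 := by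
  rw [normSq_sum, normSq_sum]
  set e : ↥((QV.erase r).erase q) ≃ ↥((QV.erase q).erase r) :=
    Equiv.subtypeEquivRight (by intro x; simp [Finset.mem_erase]; tauto) with he
  refine Fintype.sum_equiv (Equiv.arrowCongr e (Equiv.refl Bool)) _ _ ?_
  intro g
  have key : extFun QV r c (extFun (QV.erase r) q d g)
      = extFun QV q d (extFun (QV.erase q) r c ((e.arrowCongr (Equiv.refl Bool)) g)) := by
    funext x
    simp only [extFun]
    by_cases hx : (x : V) = r
    · rw [dif_pos hx, dif_neg (by rw [hx]; exact hrq), dif_pos hx]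
    · by_cases hx' : (x : V) = q
      · rw [dif_neg hx, dif_pos hx', dif_pos hx']
      · rw [dif_neg hx, dif_neg hx', dif_neg hx', dif_neg hx]
        simp only [Equiv.arrowCongr_apply, Equiv.coe_refl, Function.comp_apply]
        congr 1
  show ‖Q (extFun QV r c (extFun (QV.erase r) q d g))‖^2
      = ‖Q (extFun QV q d (extFun (QV.erase q) r c ((e.arrowCongr (Equiv.refl Bool)) g)))‖^2
  rw [key]

/-- Probabilities of successive measurements on distinct qubits satisfy the
exchange identity `p_{r,c} · s_{q,d} = p_{q,d} · s_{r,c}`. -/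
theorem prob_exchange (QV : Finset V) (r q : V) (hr : r ∈ QV) (hq : q ∈ QV) (hrq : r ≠ q)
    (c d : Bool) (Q : H QV) (hreg : Q = 0 ∨ ‖Q‖ = 1) :
    prob QV r c Q * prob (QV.erase r) q d (nmeas QV r c Q)
      = prob QV q d Q * prob (QV.erase q) r c (nmeas QV q d Q) := by
  rw [key QV r q c d Q, key QV q r d c Q, double_sum QV r q hrq c d Q]
end

section
/- For an abstract probabilistic rewriting system with one-step rules: deterministic steps a → b and binary probabilistic branchings a →_p b, a →_q c with p + q = 1, satisfying the quasi-diamond properties of Q* (deterministic/deterministic steps close in one step or coincide; deterministic and probabilistic steps commute; two probabilistic branchings on distinct redexes commute with matching products of probabilities), any two maximal finite computation trees from the same root assign the same probability to each normal form. -/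
attribute [local instance] Classical.propDecidable

/-- Finite probabilistic computations: a leaf `[C]`, a unary node `[C, T]`, or a
binary probabilistic node `[(p, q, C), T₁, T₂]`. -/
inductive FT (σ : Type) : Type
  | leaf : σ → FT σ
  | one : σ → FT σ → FT σ
  | two : ℝ → ℝ → σ → FT σ → FT σ → FT σ

variable {σ : Type}

/-- The root of a finite probabilistic computation. -/
def FT.root : FT σ → σ
  | .leaf c => c
  | .one c _ => c
  | .two _ _ c _ _ => c

/-- Validity of a finite probabilistic computation with respect to a deterministic
step relation `det` and a probabilistic branching relation `branch`
(`branch c (p, d) (q, e)` means `c` branches into `d` with probability `p` and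
into `e` with probability `q`). -/
inductive FT.Valid (det : σ → σ → Prop) (branch : σ → ℝ × σ → ℝ × σ → Prop) :
    FT σ → Prop
  | leaf (c : σ) : FT.Valid det branch (.leaf c)
  | one {c : σ} {T : FT σ} : det c T.root → FT.Valid det branch T →
      FT.Valid det branch (.one c T)
  | two {p q : ℝ} {c : σ} {T₁ T₂ : FT σ} :
      branch c (p, T₁.root) (q, T₂.root) →
      FT.Valid det branch T₁ → FT.Valid det branch T₂ →
      FT.Valid det branch (.two p q c T₁ T₂)

/-- The probability of observing `C` as a leaf of a finite computation. -/
noncomputable def FT.Pr (C : σ) : FT σ → ℝ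
  | .leaf d => if d = C then 1 else 0
  | .one _ T => T.Pr C
  | .two p q _ T₁ T₂ => p * T₁.Pr C + q * T₂.Pr C

/-- The number of leaves of a finite computation equal to `C` (in `ℕ ∪ {ℵ₀}`). -/
noncomputable def FT.Nc (C : σ) : FT σ → ℕ∞
  | .leaf d => if d = C then 1 else 0
  | .one _ T => T.Nc C
  | .two _ _ _ T₁ T₂ => T₁.Nc C + T₂.Nc C

/-- The probability of observing any normal form as a leaf of a finite computation. -/
noncomputable def FT.PrAny (NF : σ → Prop) : FT σ → ℝ
  | .leaf d => if NF d then 1 else 0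
  | .one _ T => T.PrAny NF
  | .two p q _ T₁ T₂ => p * T₁.PrAny NF + q * T₂.PrAny NF

/-- The number of normal-form leaves of a finite computation (in `ℕ ∪ {ℵ₀}`). -/
noncomputable def FT.NAny (NF : σ → Prop) : FT σ → ℕ∞
  | .leaf d => if NF d then 1 else 0
  | .one _ T => T.NAny NF
  | .two _ _ _ T₁ T₂ => T₁.NAny NF + T₂.NAny NF

/-- A finite probabilistic computation is maximal if all its leaves are normal forms. -/
def FT.Maximal (NF : σ → Prop) : FT σ → Prop
  | .leaf c => NF c
  | .one _ T => T.Maximal NF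
  | .two _ _ _ T₁ T₂ => T₁.Maximal NF ∧ T₂.Maximal NF

/-- A state is in normal form when no reduction step applies to it. -/
def IsNF (det : σ → σ → Prop) (branch : σ → ℝ × σ → ℝ × σ → Prop) (c : σ) : Prop :=
  (∀ d, ¬ det c d) ∧ ∀ x y, ¬ branch c x y

theorem FT.strip_det (det : σ → σ → Prop) (branch : σ → ℝ × σ → ℝ × σ → Prop)
    (hdd : ∀ a b c, det a b → det a c → b = c ∨ ∃ d, det b d ∧ det c d)
    (hdp : ∀ a b p c q d, det a b → branch a (p, c) (q, d) →
      ∃ c' d', branch b (p, c') (q, d') ∧ det c c' ∧ det d d') :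
    ∀ P : FT σ, P.Valid det branch → P.Maximal (IsNF det branch) →
    ∀ b, det P.root b →
    ∃ P' : FT σ, P'.Valid det branch ∧ P'.Maximal (IsNF det branch) ∧
      P'.root = b ∧ ∀ C, P'.Pr C = P.Pr C := by
  intro P
  induction P with
  | leaf c =>
    intro _ hm b hdet
    exact absurd hdet (hm.1 b)
  | one c T ih =>
    intro hv hm b hdet
    cases hv with
    | one hstep hvT =>
      rcases hdd c T.root b hstep hdet with h | ⟨d, h1, h2⟩
      · exact ⟨T, hvT, hm, h, fun C => rfl⟩
      · obtain ⟨T', hvT', hmT', hrT', hPrT'⟩ := ih hvT hm d h1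
        refine ⟨.one b T', ?_, hmT', rfl, fun C => hPrT' C⟩
        exact FT.Valid.one (hrT' ▸ h2) hvT'
  | two p q c T₁ T₂ ih₁ ih₂ =>
    intro hv hm b hdet
    cases hv with
    | two hbr hv₁ hv₂ =>
      obtain ⟨c', d', hbr', hd1, hd2⟩ := hdp c b p T₁.root q T₂.root hdet hbr
      obtain ⟨T₁', hvT₁', hmT₁', hrT₁', hPrT₁'⟩ := ih₁ hv₁ hm.1 c' hd1
      obtain ⟨T₂', hvT₂', hmT₂', hrT₂', hPrT₂'⟩ := ih₂ hv₂ hm.2 d' hd2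
      refine ⟨.two p q b T₁' T₂', ?_, ⟨hmT₁', hmT₂'⟩, rfl, fun C => ?_⟩
      · exact FT.Valid.two (hrT₁' ▸ hrT₂' ▸ hbr') hvT₁' hvT₂'
      · show p * T₁'.Pr C + q * T₂'.Pr C = p * T₁.Pr C + q * T₂.Pr C
        rw [hPrT₁', hPrT₂']

theorem FT.strip_branch (det : σ → σ → Prop) (branch : σ → ℝ × σ → ℝ × σ → Prop)
    (hdp : ∀ a b p c q d, det a b → branch a (p, c) (q, d) →
      ∃ c' d', branch b (p, c') (q, d') ∧ det c c' ∧ det d d')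
    (hpp : ∀ a p₀ b₀ p₁ b₁ s₀ c₀ s₁ c₁,
      branch a (p₀, b₀) (p₁, b₁) → branch a (s₀, c₀) (s₁, c₁) →
      ((p₀, b₀) = (s₀, c₀) ∧ (p₁, b₁) = (s₁, c₁)) ∨
      ∃ (d : Bool → Bool → σ) (t u : Bool → Bool → ℝ),
        branch b₀ (t false false, d false false) (t false true, d false true) ∧
        branch b₁ (t true false, d true false) (t true true, d true true) ∧
        branch c₀ (u false false, d false false) (u true false, d true false) ∧
        branch c₁ (u false true, d false true) (u true true, d true true) ∧
        ∀ i j, (bif i then p₁ else p₀) * t i j = (bif j then s₁ else s₀) * u i j) :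
    ∀ P : FT σ, P.Valid det branch → P.Maximal (IsNF det branch) →
    ∀ p b q c, branch P.root (p, b) (q, c) →
    ∃ Pb Pc : FT σ, Pb.Valid det branch ∧ Pc.Valid det branch ∧
      Pb.Maximal (IsNF det branch) ∧ Pc.Maximal (IsNF det branch) ∧
      Pb.root = b ∧ Pc.root = c ∧
      ∀ C, P.Pr C = p * Pb.Pr C + q * Pc.Pr C := by
  intro P
  induction P with
  | leaf a =>
    intro _ hm p b q c hbr
    exact absurd hbr (hm.2 _ _)
  | one a T ih =>
    intro hv hm p b q c hbr
    cases hv with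
    | one hstep hvT =>
      obtain ⟨c', d', hbr', hd1, hd2⟩ := hdp a T.root p b q c hstep hbr
      obtain ⟨Tb, Tc, hvTb, hvTc, hmTb, hmTc, hrTb, hrTc, hPr⟩ :=
        ih hvT hm p c' q d' hbr'
      refine ⟨.one b Tb, .one c Tc, FT.Valid.one (hrTb ▸ hd1) hvTb,
        FT.Valid.one (hrTc ▸ hd2) hvTc, hmTb, hmTc, rfl, rfl, fun C => hPr C⟩
  | two p₀ p₁ a T₀ T₁ ih₀ ih₁ =>
    intro hv hm p b q c hbr
    cases hv with
    | two hbr0 hv₀ hv₁ =>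
      rcases hpp a p₀ T₀.root p₁ T₁.root p b q c hbr0 hbr with
        ⟨h₀, h₁⟩ | ⟨d, t, u, hb0, hb1, hcb, hcc, heq⟩
      · obtain ⟨hp₀, hb₀⟩ := Prod.mk.injEq .. ▸ h₀
        obtain ⟨hp₁, hb₁⟩ := Prod.mk.injEq .. ▸ h₁
        refine ⟨T₀, T₁, hv₀, hv₁, hm.1, hm.2, hb₀, hb₁, fun C => ?_⟩
        show p₀ * T₀.Pr C + p₁ * T₁.Pr C = _
        rw [hp₀, hp₁]
      · obtain ⟨S00, S01, hvS00, hvS01, hmS00, hmS01, hr00, hr01, hPr0⟩ :=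
          ih₀ hv₀ hm.1 _ _ _ _ hb0
        obtain ⟨S10, S11, hvS10, hvS11, hmS10, hmS11, hr10, hr11, hPr1⟩ :=
          ih₁ hv₁ hm.2 _ _ _ _ hb1
        refine ⟨.two (u false false) (u true false) b S00 S10,
                .two (u false true) (u true true) c S01 S11,
          FT.Valid.two (hr00 ▸ hr10 ▸ hcb) hvS00 hvS10,
          FT.Valid.two (hr01 ▸ hr11 ▸ hcc) hvS01 hvS11,
          ⟨hmS00, hmS10⟩, ⟨hmS01, hmS11⟩, rfl, rfl, fun C => ?_⟩
        have e00 := heq false false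
        have e01 := heq false true
        have e10 := heq true false
        have e11 := heq true true
        simp only [Bool.cond_false, Bool.cond_true] at e00 e01 e10 e11
        show p₀ * T₀.Pr C + p₁ * T₁.Pr C =
          p * (u false false * S00.Pr C + u true false * S10.Pr C) +
          q * (u false true * S01.Pr C + u true true * S11.Pr C)
        rw [hPr0 C, hPr1 C]
        linear_combination S00.Pr C * e00 + S01.Pr C * e01 +
          S10.Pr C * e10 + S11.Pr C * e11

/-- Strong confluence for an abstract probabilistic rewriting system satisfying the
quasi-diamond properties of Q*: any two maximal finite computation trees from the
same root assign the same probability to each normal form. -/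
theorem finite_strong_confluence
    (det : σ → σ → Prop) (branch : σ → ℝ × σ → ℝ × σ → Prop)
    (hsum : ∀ a p b q c, branch a (p, b) (q, c) → 0 ≤ p ∧ 0 ≤ q ∧ p + q = 1)
    (hdd : ∀ a b c, det a b → det a c → b = c ∨ ∃ d, det b d ∧ det c d)
    (hdp : ∀ a b p c q d, det a b → branch a (p, c) (q, d) →
      ∃ c' d', branch b (p, c') (q, d') ∧ det c c' ∧ det d d')
    (hpp : ∀ a p₀ b₀ p₁ b₁ s₀ c₀ s₁ c₁,
      branch a (p₀, b₀) (p₁, b₁) → branch a (s₀, c₀) (s₁, c₁) →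
      ((p₀, b₀) = (s₀, c₀) ∧ (p₁, b₁) = (s₁, c₁)) ∨
      ∃ (d : Bool → Bool → σ) (t u : Bool → Bool → ℝ),
        branch b₀ (t false false, d false false) (t false true, d false true) ∧
        branch b₁ (t true false, d true false) (t true true, d true true) ∧
        branch c₀ (u false false, d false false) (u true false, d true false) ∧
        branch c₁ (u false true, d false true) (u true true, d true true) ∧
        ∀ i j, (bif i then p₁ else p₀) * t i j = (bif j then s₁ else s₀) * u i j)
    (P R : FT σ)
    (hvP : P.Valid det branch) (hvR : R.Valid det branch)
    (hmP : P.Maximal (IsNF det branch)) (hmR : R.Maximal (IsNF det branch))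
    (hroot : P.root = R.root)
    (C : σ) (hC : IsNF det branch C) :
    FT.Pr C P = FT.Pr C R := by
  clear hC hsum
  induction R generalizing P with
  | leaf d =>
    cases P with
    | leaf e =>
      have : e = d := hroot
      subst this; rfl
    | one e T =>
      cases hvP with
      | one hstep _ =>
        have : e = d := hroot
        exact absurd hstep (this ▸ hmR.1 T.root)
    | two p q e T₁ T₂ =>
      cases hvP with
      | two hbr _ _ =>
        have : e = d := hroot
        exact absurd hbr (this ▸ hmR.2 _ _)
  | one d T ih =>
    cases hvR with
    | one hstep hvT =>
      obtain ⟨P', hvP', hmP', hrP', hPr'⟩ :=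
        FT.strip_det det branch hdd hdp P hvP hmP T.root (hroot ▸ hstep)
      have := ih P' hvP' hvT hmP' hmR hrP'
      show FT.Pr C P = FT.Pr C T
      rw [← this, hPr' C]
  | two p q d T₁ T₂ ih₁ ih₂ =>
    cases hvR with
    | two hbr hv₁ hv₂ =>
      obtain ⟨Pb, Pc, hvPb, hvPc, hmPb, hmPc, hrPb, hrPc, hPr⟩ :=
        FT.strip_branch det branch hdp hpp P hvP hmP p T₁.root q T₂.root
          (hroot ▸ hbr)
      have h₁ := ih₁ Pb hvPb hv₁ hmPb hmR.1 hrPb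
      have h₂ := ih₂ Pc hvPc hv₂ hmPc hmR.2 hrPc
      show FT.Pr C P = p * T₁.Pr C + q * T₂.Pr C
      rw [hPr C, h₁, h₂]
end

section
/- Strong confluence of probabilistic computations: for any two maximal probabilistic computations P and R with the same root configuration, and for every normal form C, the probabilities P(P,C) = P(R,C) and leaf counts N(P,C) = N(R,C) coincide; moreover P_any(P) = P_any(R) and N_any(P) = N_any(R). -/
attribute [local instance] Classical.propDecidable

variable {σ : Type}

/-- Possibly infinite probabilistic computations, represented by their (partial)
labelling of tree positions (lists of booleans: `false` = first/left child,
`true` = right child) together with the pair of probabilities decorating each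
binary (measurement) node. -/
structure PT (σ : Type) where
  label : List Bool → Option σ
  pr : List Bool → Option (ℝ × ℝ)

/-- The immediate subtree of a possibly infinite computation in direction `b`. -/
def PT.child (T : PT σ) (b : Bool) : PT σ :=
  ⟨fun l => T.label (b :: l), fun l => T.pr (b :: l)⟩

/-- Validity of a possibly infinite probabilistic computation: every defined node
either is a leaf, or has exactly one child reached by a `det` step, or is a binary
node whose two children are reached by a probabilistic branching. -/
structure PT.Valid (det : σ → σ → Prop) (branch : σ → ℝ × σ → ℝ × σ → Prop)
    (T : PT σ) : Prop where
  root_isSome : (T.label []).isSome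
  none_child : ∀ l, T.label l = none →
    T.label (l ++ [false]) = none ∧ T.label (l ++ [true]) = none ∧ T.pr l = none
  right_imp_left : ∀ l, (T.label (l ++ [true])).isSome → (T.label (l ++ [false])).isSome
  det_step : ∀ l c d, T.label l = some c → T.label (l ++ [false]) = some d →
    T.label (l ++ [true]) = none → T.pr l = none ∧ det c d
  branch_step : ∀ l c, T.label l = some c → (T.pr l).isSome →
    ∃ p q d e, T.pr l = some (p, q) ∧ T.label (l ++ [false]) = some d ∧
      T.label (l ++ [true]) = some e ∧ branch c (p, d) (q, e)
  pr_of_two : ∀ l, (T.label (l ++ [true])).isSome → (T.pr l).isSome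

/-- A possibly infinite computation is maximal if every leaf is a normal form. -/
def PT.Maximal (NF : σ → Prop) (T : PT σ) : Prop :=
  ∀ l c, T.label l = some c → T.label (l ++ [false]) = none → NF c

/-- The sub-computation relation `F ⊑ T`: the finite computation `F` is a finite
truncation of the possibly infinite computation `T`. -/
inductive SubComp : FT σ → PT σ → Prop
  | leaf {c : σ} {T : PT σ} : T.label [] = some c → SubComp (.leaf c) T
  | one {c : σ} {T : PT σ} {F : FT σ} : T.label [] = some c → T.pr [] = none →
      (T.label [false]).isSome → T.label [true] = none →
      SubComp F (T.child false) → SubComp (.one c F) T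
  | two {p q : ℝ} {c : σ} {T : PT σ} {F G : FT σ} : T.label [] = some c →
      T.pr [] = some (p, q) → SubComp F (T.child false) → SubComp G (T.child true) →
      SubComp (.two p q c F G) T

/-- The probability of observing `C` in a possibly infinite computation: the
supremum over all finite sub-computations. -/
noncomputable def PT.Pr (T : PT σ) (C : σ) : ℝ :=
  sSup {x : ℝ | ∃ F : FT σ, SubComp F T ∧ FT.Pr C F = x}

/-- The number of leaves equal to `C` in a possibly infinite computation. -/
noncomputable def PT.Nc (T : PT σ) (C : σ) : ℕ∞ :=
  sSup {n : ℕ∞ | ∃ F : FT σ, SubComp F T ∧ FT.Nc C F = n}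

/-- The probability of observing any normal form in a possibly infinite computation. -/
noncomputable def PT.PrAny (NF : σ → Prop) (T : PT σ) : ℝ :=
  sSup {x : ℝ | ∃ F : FT σ, SubComp F T ∧ FT.PrAny NF F = x}

/-- The number of normal-form leaves of a possibly infinite computation. -/
noncomputable def PT.NAny (NF : σ → Prop) (T : PT σ) : ℕ∞ :=
  sSup {n : ℕ∞ | ∃ F : FT σ, SubComp F T ∧ FT.NAny NF F = n}

namespace SC

variable {σ : Type}

/-- no infinite chain implies well-foundedness of the reversed relation -/
theorem wf_of_no_chain (r : σ → σ → Prop) (h : ¬ ∃ f : ℕ → σ, ∀ n, r (f n) (f (n+1))) :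
    WellFounded (fun b a => r a b) := by
  by_contra hwf
  rw [WellFounded.wellFounded_iff_has_min] at hwf
  push_neg at hwf
  obtain ⟨s, ⟨x0, hx0⟩, hs⟩ := hwf
  have step : ∀ x ∈ s, ∃ y ∈ s, r x y := by
    intro x hx
    obtain ⟨y, hy, hr⟩ := hs x hx
    exact ⟨y, hy, hr⟩
  choose g hg1 hg2 using step
  exact h ⟨fun n => Nat.rec (motive := fun _ => {z : σ // z ∈ s}) ⟨x0, hx0⟩
      (fun _ p => ⟨g p.1 p.2, hg1 p.1 p.2⟩) n, fun n => hg2 _ _⟩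

/-- union of the two deterministic relations -/
abbrev Det (ndet kdet : σ → σ → Prop) : σ → σ → Prop := fun a b => ndet a b ∨ kdet a b

/-- Bundle of the rewriting system hypotheses together with the target tree. -/
structure Ctx (ndet kdet : σ → σ → Prop) (branch : σ → ℝ × σ → ℝ × σ → Prop) : Type where
  hsum : ∀ a p b q c, branch a (p, b) (q, c) → 0 ≤ p ∧ 0 ≤ q ∧ p + q = 1
  hkk : ∀ a b c, kdet a b → kdet a c → b = c ∨ ∃ d, kdet b d ∧ kdet c d
  hkn : ∀ a b c, kdet a b → ndet a c → ndet b c ∨ ∃ d, ndet b d ∧ kdet c d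
  hkm : ∀ a b p c q d, kdet a b → branch a (p, c) (q, d) →
      ∃ c' d', branch b (p, c') (q, d') ∧ kdet c c' ∧ kdet d d'
  hnn : ∀ a b c, ndet a b → ndet a c → b = c ∨ ∃ d, ndet b d ∧ ndet c d
  hnm : ∀ a b p c q d, ndet a b → branch a (p, c) (q, d) →
      ∃ c' d', branch b (p, c') (q, d') ∧ (ndet c c' ∨ kdet c c') ∧
        (ndet d d' ∨ kdet d d')
  hmm : ∀ a p₀ b₀ p₁ b₁ s₀ c₀ s₁ c₁,
      branch a (p₀, b₀) (p₁, b₁) → branch a (s₀, c₀) (s₁, c₁) →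
      ((p₀, b₀) = (s₀, c₀) ∧ (p₁, b₁) = (s₁, c₁)) ∨
      ∃ (d : Bool → Bool → σ) (t u : Bool → Bool → ℝ),
        branch b₀ (t false false, d false false) (t false true, d false true) ∧
        branch b₁ (t true false, d true false) (t true true, d true true) ∧
        branch c₀ (u false false, d false false) (u true false, d true false) ∧
        branch c₁ (u false true, d false true) (u true true, d true true) ∧
        ∀ i j, (bif i then p₁ else p₀) * t i j = (bif j then s₁ else s₀) * u i j
  hsn : ¬ ∃ f : ℕ → σ, ∀ n : ℕ, kdet (f n) (f (n + 1))
  T' : PT σ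
  hv' : T'.Valid (Det ndet kdet) branch
  hm' : T'.Maximal (IsNF (Det ndet kdet) branch)

variable {ndet kdet : σ → σ → Prop} {branch : σ → ℝ × σ → ℝ × σ → Prop}

theorem Ctx.wfK (K : Ctx ndet kdet branch) : WellFounded (fun b a => kdet a b) :=
  wf_of_no_chain kdet K.hsn

/-- one deterministic step joined against another: the four quasi-confluence cases -/
theorem Ctx.join_main (K : Ctx ndet kdet branch) {a b c : σ}
    (hab : Det ndet kdet a b) (hac : Det ndet kdet a c) :
    b = c ∨ Det ndet kdet b c ∨ (Det ndet kdet c b ∧ kdet a c) ∨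
      ∃ d, Det ndet kdet b d ∧ Det ndet kdet c d := by
  rcases hab with hb | hb <;> rcases hac with hc | hc
  · rcases K.hnn a b c hb hc with h | ⟨d, h1, h2⟩
    · exact Or.inl h
    · exact Or.inr (Or.inr (Or.inr ⟨d, Or.inl h1, Or.inl h2⟩))
  · rcases K.hkn a c b hc hb with h | ⟨d, h1, h2⟩
    · exact Or.inr (Or.inr (Or.inl ⟨Or.inl h, hc⟩))
    · exact Or.inr (Or.inr (Or.inr ⟨d, Or.inr h2, Or.inl h1⟩))
  · rcases K.hkn a b c hb hc with h | ⟨d, h1, h2⟩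
    · exact Or.inr (Or.inl (Or.inl h))
    · exact Or.inr (Or.inr (Or.inr ⟨d, Or.inl h1, Or.inr h2⟩))
  · rcases K.hkk a b c hb hc with h | ⟨d, h1, h2⟩
    · exact Or.inl h
    · exact Or.inr (Or.inr (Or.inr ⟨d, Or.inr h1, Or.inr h2⟩))

/-- a deterministic step against a branching -/
theorem Ctx.joinBD (K : Ctx ndet kdet branch) {a b : σ} {p q : ℝ} {c d : σ}
    (hab : Det ndet kdet a b) (hbr : branch a (p, c) (q, d)) :
    ∃ c' d', branch b (p, c') (q, d') ∧ Det ndet kdet c c' ∧ Det ndet kdet d d' := by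
  rcases hab with h | h
  · exact K.hnm a b p c q d h hbr
  · obtain ⟨c', d', h1, h2, h3⟩ := K.hkm a b p c q d h hbr
    exact ⟨c', d', h1, Or.inr h2, Or.inr h3⟩

/-- node shapes for tree generators -/
inductive Shp (σ X : Type) : Type
  | leaf (c : σ)
  | one (c : σ) (x : X)
  | two (p q : ℝ) (c : σ) (x₀ x₁ : X)

def Shp.conf {X : Type} : Shp σ X → σ
  | .leaf c => c
  | .one c _ => c
  | .two _ _ c _ _ => c

/-- generator states for the stripped trees -/
inductive St (K : Ctx ndet kdet branch) : Type
  | sync (π : List Bool) (h : (K.T'.label π).isSome)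
  | pend (π : List Bool) (a b : σ) (ha : K.T'.label π = some a) (hab : Det ndet kdet a b)
  | bp (π : List Bool) (i : Bool) (a : σ) (q₀ q₁ : ℝ) (e₀ e₁ : σ)
      (ha : K.T'.label π = some a) (hbr : branch a (q₀, e₀) (q₁, e₁))

/-- pending-det states (used for the well-founded part of the construction) -/
structure PD (K : Ctx ndet kdet branch) : Type where
  π : List Bool
  a : σ
  b : σ
  ha : K.T'.label π = some a
  hab : Det ndet kdet a b

variable {K : Ctx ndet kdet branch}

theorem label_true_none (K : Ctx ndet kdet branch) {π : List Bool}
    (hpr : ¬ (K.T'.pr π).isSome) : K.T'.label (π ++ [true]) = none := by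
  rcases h : K.T'.label (π ++ [true]) with _ | c
  · rfl
  · exact absurd (K.hv'.pr_of_two π (by rw [h]; rfl)) hpr

theorem label_false_some (K : Ctx ndet kdet branch) {π : List Bool}
    (hpr : (K.T'.pr π).isSome) : (K.T'.label (π ++ [false])).isSome := by
  rcases h : K.T'.label π with _ | c
  · rw [(K.hv'.none_child π h).2.2] at hpr; exact absurd hpr (by simp)
  · obtain ⟨p, q, d, e, _, hd, _, _⟩ := K.hv'.branch_step π c h hpr
    rw [hd]; rfl

/-- data of a branching node of `T'` -/
structure BrData (K : Ctx ndet kdet branch) (π : List Bool) (c : σ) : Type where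
  p : ℝ
  q : ℝ
  d : σ
  e : σ
  hpq : K.T'.pr π = some (p, q)
  hd : K.T'.label (π ++ [false]) = some d
  he : K.T'.label (π ++ [true]) = some e
  hbr : branch c (p, d) (q, e)

noncomputable def brData (K : Ctx ndet kdet branch) (π : List Bool) (c : σ)
    (hc : K.T'.label π = some c) (hpr : (K.T'.pr π).isSome) : BrData K π c :=
  Classical.choice (by
    obtain ⟨p, q, d, e, h1, h2, h3, h4⟩ := K.hv'.branch_step π c hc hpr
    exact ⟨⟨p, q, d, e, h1, h2, h3, h4⟩⟩)

/-- data joining a pending deterministic step against a branching -/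
structure JBD (K : Ctx ndet kdet branch) (b : σ) (p q : ℝ) (d e : σ) : Type where
  d' : σ
  e' : σ
  hbr' : branch b (p, d') (q, e')
  hdd' : Det ndet kdet d d'
  hee' : Det ndet kdet e e'

noncomputable def jbd (K : Ctx ndet kdet branch) {a b : σ} {p q : ℝ} {d e : σ}
    (hab : Det ndet kdet a b) (hbr : branch a (p, d) (q, e)) : JBD K b p q d e :=
  Classical.choice (by
    obtain ⟨d', e', h1, h2, h3⟩ := K.joinBD hab hbr
    exact ⟨⟨d', e', h1, h2, h3⟩⟩)

/-- data of the square case when joining two deterministic steps -/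
structure SqD (K : Ctx ndet kdet branch) (b c : σ) : Type where
  f : σ
  hbf : Det ndet kdet b f
  hcf : Det ndet kdet c f

noncomputable def sqd (K : Ctx ndet kdet branch) {a b c : σ}
    (hab : Det ndet kdet a b) (hac : Det ndet kdet a c)
    (h1 : ¬ b = c) (h2 : ¬ Det ndet kdet b c) (h3 : ¬ (Det ndet kdet c b ∧ kdet a c)) :
    SqD K b c :=
  Classical.choice (by
    rcases K.join_main hab hac with h | h | h | ⟨f, hf1, hf2⟩
    · exact absurd h h1
    · exact absurd h h2
    · exact absurd h h3
    · exact ⟨⟨f, hf1, hf2⟩⟩)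

/-- the generator step for synchronized states -/
noncomputable def outSync (K : Ctx ndet kdet branch) (π : List Bool)
    (h : (K.T'.label π).isSome) : Shp σ (St K) :=
  if hpr : (K.T'.pr π).isSome then
    let B := brData K π _ (Option.some_get h).symm hpr
    .two B.p B.q ((K.T'.label π).get h) (.sync (π ++ [false]) (by rw [B.hd]; rfl))
      (.sync (π ++ [true]) (by rw [B.he]; rfl))
  else if hf : (K.T'.label (π ++ [false])).isSome then
    .one ((K.T'.label π).get h) (.sync (π ++ [false]) hf)
  else
    .leaf ((K.T'.label π).get h)

/-- the generator step for pending-det states -/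
noncomputable def outPendBody (K : Ctx ndet kdet branch) (s : PD K)
    (rec : ∀ s' : PD K, kdet s.a s'.a → Shp σ (St K)) : Shp σ (St K) :=
  if hpr : (K.T'.pr s.π).isSome then
    let B := brData K s.π s.a s.ha hpr
    let J : JBD K s.b B.p B.q B.d B.e := jbd K s.hab B.hbr
    .two B.p B.q s.b (.pend (s.π ++ [false]) B.d J.d' B.hd J.hdd')
      (.pend (s.π ++ [true]) B.e J.e' B.he J.hee')
  else if hf : (K.T'.label (s.π ++ [false])).isSome then
    if heq : s.b = (K.T'.label (s.π ++ [false])).get hf then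
      outSync K (s.π ++ [false]) hf
    else if hbc : Det ndet kdet s.b ((K.T'.label (s.π ++ [false])).get hf) then
      .one s.b (.sync (s.π ++ [false]) hf)
    else if hcb : Det ndet kdet ((K.T'.label (s.π ++ [false])).get hf) s.b ∧
        kdet s.a ((K.T'.label (s.π ++ [false])).get hf) then
      rec ⟨s.π ++ [false], (K.T'.label (s.π ++ [false])).get hf, s.b,
        (Option.some_get hf).symm, hcb.1⟩ hcb.2
    else
      let S := sqd K s.hab
        ((K.hv'.det_step s.π s.a _ s.ha (Option.some_get hf).symm (label_true_none K hpr)).2)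
        heq hbc hcb
      .one s.b (.pend (s.π ++ [false]) ((K.T'.label (s.π ++ [false])).get hf) S.f
        (Option.some_get hf).symm S.hcf)
  else
    (((K.hm' s.π s.a s.ha (Option.not_isSome_iff_eq_none.mp hf)).1) s.b s.hab).elim

noncomputable def outPend (K : Ctx ndet kdet branch) : PD K → Shp σ (St K) :=
  (InvImage.wf (fun s : PD K => s.a) K.wfK).fix (outPendBody K)

theorem outPend_eq (s : PD K) :
    outPend K s = outPendBody K s (fun s' _ => outPend K s') :=
  WellFounded.fix_eq _ _ s

end SC

namespace SC
variable {σ : Type}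
variable {ndet kdet : σ → σ → Prop} {branch : σ → ℝ × σ → ℝ × σ → Prop}
variable {K : Ctx ndet kdet branch}

/-- data of the square case when joining two branchings -/
structure MmD (K : Ctx ndet kdet branch) (q₀ q₁ : ℝ) (e₀ e₁ : σ) (s₀ s₁ : ℝ) (c₀ c₁ : σ) :
    Type where
  d : Bool → Bool → σ
  t : Bool → Bool → ℝ
  u : Bool → Bool → ℝ
  h1 : branch e₀ (t false false, d false false) (t false true, d false true)
  h2 : branch e₁ (t true false, d true false) (t true true, d true true)
  h3 : branch c₀ (u false false, d false false) (u true false, d true false)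
  h4 : branch c₁ (u false true, d false true) (u true true, d true true)
  h5 : ∀ i j, (bif i then q₁ else q₀) * t i j = (bif j then s₁ else s₀) * u i j

noncomputable def mmd (K : Ctx ndet kdet branch) {a : σ} {q₀ q₁ : ℝ} {e₀ e₁ : σ}
    {s₀ s₁ : ℝ} {c₀ c₁ : σ} (hbr : branch a (q₀, e₀) (q₁, e₁))
    (hbrT : branch a (s₀, c₀) (s₁, c₁))
    (hid : ¬ ((q₀, e₀) = (s₀, c₀) ∧ (q₁, e₁) = (s₁, c₁))) :
    MmD K q₀ q₁ e₀ e₁ s₀ s₁ c₀ c₁ :=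
  Classical.choice (by
    obtain ⟨d, t, u, h1, h2, h3, h4, h5⟩ :=
      (K.hmm a q₀ e₀ q₁ e₁ s₀ c₀ s₁ c₁ hbr hbrT).resolve_left hid
    exact ⟨⟨d, t, u, h1, h2, h3, h4, h5⟩⟩)

/-- the generator step for pending-branch states: both outputs computed jointly -/
noncomputable def bpCore (K : Ctx ndet kdet branch) (π : List Bool) (a : σ) (q₀ q₁ : ℝ)
    (e₀ e₁ : σ) (ha : K.T'.label π = some a) (hbr : branch a (q₀, e₀) (q₁, e₁)) :
    Shp σ (St K) × Shp σ (St K) :=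
  if hpr : (K.T'.pr π).isSome then
    let B := brData K π a ha hpr
    if hid : (q₀, e₀) = (B.p, B.d) ∧ (q₁, e₁) = (B.q, B.e) then
      (outSync K (π ++ [false]) (by rw [B.hd]; rfl),
       outSync K (π ++ [true]) (by rw [B.he]; rfl))
    else
      let M := mmd K hbr B.hbr hid
      (.two (M.t false false) (M.t false true) e₀
        (.bp (π ++ [false]) false B.d (M.u false false) (M.u true false)
          (M.d false false) (M.d true false) B.hd M.h3)
        (.bp (π ++ [true]) false B.e (M.u false true) (M.u true true)
          (M.d false true) (M.d true true) B.he M.h4),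
       .two (M.t true false) (M.t true true) e₁
        (.bp (π ++ [false]) true B.d (M.u false false) (M.u true false)
          (M.d false false) (M.d true false) B.hd M.h3)
        (.bp (π ++ [true]) true B.e (M.u false true) (M.u true true)
          (M.d false true) (M.d true true) B.he M.h4))
  else if hf : (K.T'.label (π ++ [false])).isSome then
    let J : JBD K ((K.T'.label (π ++ [false])).get hf) q₀ q₁ e₀ e₁ :=
      jbd K ((K.hv'.det_step π a _ ha (Option.some_get hf).symm (label_true_none K hpr)).2) hbr
    (.one e₀ (.bp (π ++ [false]) false ((K.T'.label (π ++ [false])).get hf) q₀ q₁ J.d' J.e'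
        (Option.some_get hf).symm J.hbr'),
     .one e₁ (.bp (π ++ [false]) true ((K.T'.label (π ++ [false])).get hf) q₀ q₁ J.d' J.e'
        (Option.some_get hf).symm J.hbr'))
  else
    (((K.hm' π a ha (Option.not_isSome_iff_eq_none.mp hf)).2 _ _ hbr).elim)

/-- the full generator -/
noncomputable def out (K : Ctx ndet kdet branch) : St K → Shp σ (St K)
  | .sync π h => outSync K π h
  | .pend π a b ha hab => outPend K ⟨π, a, b, ha, hab⟩
  | .bp π i a q₀ q₁ e₀ e₁ ha hbr =>
      bif i then (bpCore K π a q₀ q₁ e₀ e₁ ha hbr).2 else (bpCore K π a q₀ q₁ e₀ e₁ ha hbr).1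

/-- the label function of the realized tree -/
noncomputable def runL (K : Ctx ndet kdet branch) : St K → List Bool → Option σ
  | x, [] => some (out K x).conf
  | x, b :: l =>
    match out K x with
    | .leaf _ => none
    | .one _ y => bif b then none else runL K y l
    | .two _ _ _ y₀ y₁ => runL K (bif b then y₁ else y₀) l

/-- the probability decoration of the realized tree -/
noncomputable def runP (K : Ctx ndet kdet branch) : St K → List Bool → Option (ℝ × ℝ)
  | x, [] =>
    match out K x with
    | .two p q _ _ _ => some (p, q)
    | _ => none
  | x, b :: l =>
    match out K x with
    | .leaf _ => none
    | .one _ y => bif b then none else runP K y l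
    | .two _ _ _ y₀ y₁ => runP K (bif b then y₁ else y₀) l

/-- the realized (possibly infinite) tree of a generator state -/
noncomputable def realize (K : Ctx ndet kdet branch) (x : St K) : PT σ :=
  ⟨runL K x, runP K x⟩

end SC

namespace SC
variable {σ : Type}
variable {ndet kdet : σ → σ → Prop} {branch : σ → ℝ × σ → ℝ × σ → Prop}
variable {K : Ctx ndet kdet branch}

theorem outSync_spec (K : Ctx ndet kdet branch) (π : List Bool) (h : (K.T'.label π).isSome) :
    (K.T'.pr π = none ∧ K.T'.label (π ++ [false]) = none ∧ K.T'.label (π ++ [true]) = none ∧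
      outSync K π h = .leaf ((K.T'.label π).get h))
  ∨ (∃ hf : (K.T'.label (π ++ [false])).isSome, K.T'.pr π = none ∧
      K.T'.label (π ++ [true]) = none ∧
      Det ndet kdet ((K.T'.label π).get h) ((K.T'.label (π ++ [false])).get hf) ∧
      outSync K π h = .one ((K.T'.label π).get h) (.sync (π ++ [false]) hf))
  ∨ (∃ p q d e, ∃ (hd : K.T'.label (π ++ [false]) = some d)
      (he : K.T'.label (π ++ [true]) = some e),
      K.T'.pr π = some (p, q) ∧ branch ((K.T'.label π).get h) (p, d) (q, e) ∧
      outSync K π h = .two p q ((K.T'.label π).get h)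
        (.sync (π ++ [false]) (by rw [hd]; rfl)) (.sync (π ++ [true]) (by rw [he]; rfl))) := by
  unfold outSync
  split_ifs with hpr hf
  · exact Or.inr (Or.inr ⟨(brData K π _ (Option.some_get h).symm hpr).p,
      (brData K π _ (Option.some_get h).symm hpr).q,
      (brData K π _ (Option.some_get h).symm hpr).d,
      (brData K π _ (Option.some_get h).symm hpr).e,
      (brData K π _ (Option.some_get h).symm hpr).hd,
      (brData K π _ (Option.some_get h).symm hpr).he,
      (brData K π _ (Option.some_get h).symm hpr).hpq,
      (brData K π _ (Option.some_get h).symm hpr).hbr, rfl⟩)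
  · exact Or.inr (Or.inl ⟨hf, Option.not_isSome_iff_eq_none.mp hpr, label_true_none K hpr,
      (K.hv'.det_step π _ _ (Option.some_get h).symm (Option.some_get hf).symm
        (label_true_none K hpr)).2, rfl⟩)
  · exact Or.inl ⟨Option.not_isSome_iff_eq_none.mp hpr, Option.not_isSome_iff_eq_none.mp hf,
      Option.not_isSome_iff_eq_none.mp (fun hs => hf (K.hv'.right_imp_left π hs)), rfl⟩

theorem conf_sync (K : Ctx ndet kdet branch) (π : List Bool) (h : (K.T'.label π).isSome) :
    (outSync K π h).conf = (K.T'.label π).get h := by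
  rcases outSync_spec K π h with ⟨_, _, _, hE⟩ | ⟨_, _, _, _, hE⟩ |
    ⟨_, _, _, _, _, _, _, _, hE⟩ <;> rw [hE] <;> rfl

theorem outPend_spec (K : Ctx ndet kdet branch) (s : PD K) :
    (∃ hf : (K.T'.label (s.π ++ [false])).isSome, K.T'.pr s.π = none ∧
      K.T'.label (s.π ++ [true]) = none ∧ K.T'.label (s.π ++ [false]) = some s.b ∧
      outPend K s = outSync K (s.π ++ [false]) hf)
  ∨ (∃ hf : (K.T'.label (s.π ++ [false])).isSome, K.T'.pr s.π = none ∧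
      K.T'.label (s.π ++ [true]) = none ∧
      Det ndet kdet s.b ((K.T'.label (s.π ++ [false])).get hf) ∧
      outPend K s = .one s.b (.sync (s.π ++ [false]) hf))
  ∨ (∃ (hf : (K.T'.label (s.π ++ [false])).isSome)
      (_ : kdet s.a ((K.T'.label (s.π ++ [false])).get hf))
      (hab' : Det ndet kdet ((K.T'.label (s.π ++ [false])).get hf) s.b),
      K.T'.pr s.π = none ∧ K.T'.label (s.π ++ [true]) = none ∧
      outPend K s = outPend K ⟨s.π ++ [false], (K.T'.label (s.π ++ [false])).get hf, s.b,
        (Option.some_get hf).symm, hab'⟩)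
  ∨ (∃ (hf : (K.T'.label (s.π ++ [false])).isSome) (f : σ)
      (haf : Det ndet kdet ((K.T'.label (s.π ++ [false])).get hf) f),
      K.T'.pr s.π = none ∧ K.T'.label (s.π ++ [true]) = none ∧ Det ndet kdet s.b f ∧
      outPend K s = .one s.b (.pend (s.π ++ [false]) ((K.T'.label (s.π ++ [false])).get hf) f
        (Option.some_get hf).symm haf))
  ∨ (∃ p q d e d' e', ∃ (hd : K.T'.label (s.π ++ [false]) = some d)
      (he : K.T'.label (s.π ++ [true]) = some e)
      (hdd' : Det ndet kdet d d') (hee' : Det ndet kdet e e'),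
      K.T'.pr s.π = some (p, q) ∧ branch s.a (p, d) (q, e) ∧ branch s.b (p, d') (q, e') ∧
      outPend K s = .two p q s.b (.pend (s.π ++ [false]) d d' hd hdd')
        (.pend (s.π ++ [true]) e e' he hee')) := by
  rw [outPend_eq]
  unfold outPendBody
  by_cases hpr : (K.T'.pr s.π).isSome
  · rw [dif_pos hpr]
    refine Or.inr (Or.inr (Or.inr (Or.inr ?_)))
    exact ⟨(brData K s.π s.a s.ha hpr).p, (brData K s.π s.a s.ha hpr).q,
      (brData K s.π s.a s.ha hpr).d, (brData K s.π s.a s.ha hpr).e,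
      (jbd K s.hab (brData K s.π s.a s.ha hpr).hbr).d',
      (jbd K s.hab (brData K s.π s.a s.ha hpr).hbr).e',
      (brData K s.π s.a s.ha hpr).hd, (brData K s.π s.a s.ha hpr).he,
      (jbd K s.hab (brData K s.π s.a s.ha hpr).hbr).hdd',
      (jbd K s.hab (brData K s.π s.a s.ha hpr).hbr).hee',
      (brData K s.π s.a s.ha hpr).hpq, (brData K s.π s.a s.ha hpr).hbr,
      (jbd K s.hab (brData K s.π s.a s.ha hpr).hbr).hbr', rfl⟩
  · rw [dif_neg hpr]
    by_cases hf : (K.T'.label (s.π ++ [false])).isSome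
    · rw [dif_pos hf]
      by_cases heq : s.b = (K.T'.label (s.π ++ [false])).get hf
      · rw [dif_pos heq]
        refine Or.inl ⟨hf, Option.not_isSome_iff_eq_none.mp hpr, label_true_none K hpr, ?_, rfl⟩
        rw [heq]; exact (Option.some_get hf).symm
      · rw [dif_neg heq]
        by_cases hbc : Det ndet kdet s.b ((K.T'.label (s.π ++ [false])).get hf)
        · rw [dif_pos hbc]
          exact Or.inr (Or.inl ⟨hf, Option.not_isSome_iff_eq_none.mp hpr,
            label_true_none K hpr, hbc, rfl⟩)
        · rw [dif_neg hbc]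
          by_cases hcb : Det ndet kdet ((K.T'.label (s.π ++ [false])).get hf) s.b ∧
              kdet s.a ((K.T'.label (s.π ++ [false])).get hf)
          · rw [dif_pos hcb]
            exact Or.inr (Or.inr (Or.inl ⟨hf, hcb.2, hcb.1,
              Option.not_isSome_iff_eq_none.mp hpr, label_true_none K hpr, rfl⟩))
          · rw [dif_neg hcb]
            refine Or.inr (Or.inr (Or.inr (Or.inl ⟨hf,
              (sqd K s.hab ((K.hv'.det_step s.π s.a _ s.ha (Option.some_get hf).symm
                (label_true_none K hpr)).2) heq hbc hcb).f,
              (sqd K s.hab ((K.hv'.det_step s.π s.a _ s.ha (Option.some_get hf).symm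
                (label_true_none K hpr)).2) heq hbc hcb).hcf,
              Option.not_isSome_iff_eq_none.mp hpr, label_true_none K hpr,
              (sqd K s.hab ((K.hv'.det_step s.π s.a _ s.ha (Option.some_get hf).symm
                (label_true_none K hpr)).2) heq hbc hcb).hbf, rfl⟩)))
    · exact absurd ((K.hm' s.π s.a s.ha (Option.not_isSome_iff_eq_none.mp hf)).1 s.b s.hab)
        (fun h => h)

theorem conf_pend (K : Ctx ndet kdet branch) : ∀ s : PD K, (outPend K s).conf = s.b := by
  intro s
  induction s using (InvImage.wf (fun s : PD K => s.a) K.wfK).induction with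
  | _ s IH =>
    rcases outPend_spec K s with ⟨hf, _, _, hlab, hE⟩ | ⟨_, _, _, _, hE⟩ |
      ⟨hf, hk, hab', _, _, hE⟩ | ⟨_, _, _, _, _, _, hE⟩ |
      ⟨_, _, _, _, _, _, _, _, _, _, _, _, _, hE⟩
    · rw [hE, conf_sync]
      simp [hlab]
    · rw [hE]; rfl
    · rw [hE]
      exact IH _ hk
    · rw [hE]; rfl
    · rw [hE]; rfl

theorem bpCore_spec (K : Ctx ndet kdet branch) (π : List Bool) (a : σ) (q₀ q₁ : ℝ)
    (e₀ e₁ : σ) (ha : K.T'.label π = some a) (hbr : branch a (q₀, e₀) (q₁, e₁)) :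
    (∃ (hd : (K.T'.label (π ++ [false])).isSome) (he : (K.T'.label (π ++ [true])).isSome),
      K.T'.pr π = some (q₀, q₁) ∧ K.T'.label (π ++ [false]) = some e₀ ∧
      K.T'.label (π ++ [true]) = some e₁ ∧
      bpCore K π a q₀ q₁ e₀ e₁ ha hbr =
        (outSync K (π ++ [false]) hd, outSync K (π ++ [true]) he))
  ∨ (∃ (d : Bool → Bool → σ) (t u : Bool → Bool → ℝ) (s₀ s₁ : ℝ) (c₀ c₁ : σ),
      ∃ (hc₀ : K.T'.label (π ++ [false]) = some c₀)
        (hc₁ : K.T'.label (π ++ [true]) = some c₁)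
        (h3 : branch c₀ (u false false, d false false) (u true false, d true false))
        (h4 : branch c₁ (u false true, d false true) (u true true, d true true)),
      K.T'.pr π = some (s₀, s₁) ∧ branch a (s₀, c₀) (s₁, c₁) ∧
      branch e₀ (t false false, d false false) (t false true, d false true) ∧
      branch e₁ (t true false, d true false) (t true true, d true true) ∧
      (∀ i j, (bif i then q₁ else q₀) * t i j = (bif j then s₁ else s₀) * u i j) ∧
      bpCore K π a q₀ q₁ e₀ e₁ ha hbr =
        (.two (t false false) (t false true) e₀
          (.bp (π ++ [false]) false c₀ (u false false) (u true false)
            (d false false) (d true false) hc₀ h3)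
          (.bp (π ++ [true]) false c₁ (u false true) (u true true)
            (d false true) (d true true) hc₁ h4),
         .two (t true false) (t true true) e₁
          (.bp (π ++ [false]) true c₀ (u false false) (u true false)
            (d false false) (d true false) hc₀ h3)
          (.bp (π ++ [true]) true c₁ (u false true) (u true true)
            (d false true) (d true true) hc₁ h4)))
  ∨ (∃ (a₁ : σ) (ha₁ : K.T'.label (π ++ [false]) = some a₁) (d' e' : σ)
      (hbr' : branch a₁ (q₀, d') (q₁, e')),
      K.T'.pr π = none ∧ K.T'.label (π ++ [true]) = none ∧
      Det ndet kdet a a₁ ∧ Det ndet kdet e₀ d' ∧ Det ndet kdet e₁ e' ∧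
      bpCore K π a q₀ q₁ e₀ e₁ ha hbr =
        (.one e₀ (.bp (π ++ [false]) false a₁ q₀ q₁ d' e' ha₁ hbr'),
         .one e₁ (.bp (π ++ [false]) true a₁ q₀ q₁ d' e' ha₁ hbr'))) := by
  unfold bpCore
  by_cases hpr : (K.T'.pr π).isSome
  · rw [dif_pos hpr]
    by_cases hid : (q₀, e₀) = ((brData K π a ha hpr).p, (brData K π a ha hpr).d) ∧
        (q₁, e₁) = ((brData K π a ha hpr).q, (brData K π a ha hpr).e)
    · rw [dif_pos hid]
      refine Or.inl ⟨by rw [(brData K π a ha hpr).hd]; rfl,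
        by rw [(brData K π a ha hpr).he]; rfl, ?_, ?_, ?_, rfl⟩
      · rw [(brData K π a ha hpr).hpq]
        obtain ⟨h1, h2⟩ := hid
        rw [(Prod.mk.injEq _ _ _ _).mp h1 |>.1, (Prod.mk.injEq _ _ _ _).mp h2 |>.1]
      · rw [(brData K π a ha hpr).hd]
        obtain ⟨h1, _⟩ := hid
        rw [(Prod.mk.injEq _ _ _ _).mp h1 |>.2]
      · rw [(brData K π a ha hpr).he]
        obtain ⟨_, h2⟩ := hid
        rw [(Prod.mk.injEq _ _ _ _).mp h2 |>.2]
    · rw [dif_neg hid]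
      exact Or.inr (Or.inl ⟨(mmd K hbr (brData K π a ha hpr).hbr hid).d,
        (mmd K hbr (brData K π a ha hpr).hbr hid).t,
        (mmd K hbr (brData K π a ha hpr).hbr hid).u,
        (brData K π a ha hpr).p, (brData K π a ha hpr).q,
        (brData K π a ha hpr).d, (brData K π a ha hpr).e,
        (brData K π a ha hpr).hd, (brData K π a ha hpr).he,
        (mmd K hbr (brData K π a ha hpr).hbr hid).h3,
        (mmd K hbr (brData K π a ha hpr).hbr hid).h4,
        (brData K π a ha hpr).hpq, (brData K π a ha hpr).hbr,
        (mmd K hbr (brData K π a ha hpr).hbr hid).h1,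
        (mmd K hbr (brData K π a ha hpr).hbr hid).h2,
        (mmd K hbr (brData K π a ha hpr).hbr hid).h5, rfl⟩)
  · rw [dif_neg hpr]
    by_cases hf : (K.T'.label (π ++ [false])).isSome
    · rw [dif_pos hf]
      refine Or.inr (Or.inr ⟨(K.T'.label (π ++ [false])).get hf, (Option.some_get hf).symm,
        (jbd K ((K.hv'.det_step π a _ ha (Option.some_get hf).symm
          (label_true_none K hpr)).2) hbr).d',
        (jbd K ((K.hv'.det_step π a _ ha (Option.some_get hf).symm
          (label_true_none K hpr)).2) hbr).e',
        (jbd K ((K.hv'.det_step π a _ ha (Option.some_get hf).symm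
          (label_true_none K hpr)).2) hbr).hbr',
        Option.not_isSome_iff_eq_none.mp hpr, label_true_none K hpr,
        (K.hv'.det_step π a _ ha (Option.some_get hf).symm (label_true_none K hpr)).2,
        (jbd K ((K.hv'.det_step π a _ ha (Option.some_get hf).symm
          (label_true_none K hpr)).2) hbr).hdd',
        (jbd K ((K.hv'.det_step π a _ ha (Option.some_get hf).symm
          (label_true_none K hpr)).2) hbr).hee', rfl⟩)
    · exact absurd ((K.hm' π a ha (Option.not_isSome_iff_eq_none.mp hf)).2 _ _ hbr)
        (fun h => h)

theorem conf_bp (K : Ctx ndet kdet branch) (π : List Bool) (i : Bool) (a : σ) (q₀ q₁ : ℝ)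
    (e₀ e₁ : σ) (ha : K.T'.label π = some a) (hbr : branch a (q₀, e₀) (q₁, e₁)) :
    (out K (.bp π i a q₀ q₁ e₀ e₁ ha hbr)).conf = bif i then e₁ else e₀ := by
  have hout : out K (.bp π i a q₀ q₁ e₀ e₁ ha hbr) =
      bif i then (bpCore K π a q₀ q₁ e₀ e₁ ha hbr).2
      else (bpCore K π a q₀ q₁ e₀ e₁ ha hbr).1 := rfl
  rcases bpCore_spec K π a q₀ q₁ e₀ e₁ ha hbr with
    ⟨hd, he, _, hl₀, hl₁, hE⟩ | ⟨d, t, u, s₀, s₁, c₀, c₁, hc₀, hc₁, h3, h4, _, _, _, _, _, hE⟩ |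
    ⟨a₁, ha₁, d', e', hbr', _, _, _, _, _, hE⟩
  · rw [hout, hE]
    cases i
    · show (outSync K (π ++ [false]) hd).conf = e₀
      rw [conf_sync]; simp [hl₀]
    · show (outSync K (π ++ [true]) he).conf = e₁
      rw [conf_sync]; simp [hl₁]
  · rw [hout, hE]; cases i <;> rfl
  · rw [hout, hE]; cases i <;> rfl

end SC

namespace SC
variable {σ : Type}
variable {ndet kdet : σ → σ → Prop} {branch : σ → ℝ × σ → ℝ × σ → Prop}
variable {K : Ctx ndet kdet branch}

/-- facts about one generator step -/
def SFS (K : Ctx ndet kdet branch) (sh : Shp σ (St K)) : Prop :=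
  (∀ c, sh = .leaf c → IsNF (Det ndet kdet) branch c) ∧
  (∀ c y, sh = .one c y → Det ndet kdet c (out K y).conf) ∧
  (∀ p q c y₀ y₁, sh = .two p q c y₀ y₁ → branch c (p, (out K y₀).conf) (q, (out K y₁).conf))

theorem sfs_sync (K : Ctx ndet kdet branch) (π : List Bool) (h : (K.T'.label π).isSome) :
    SFS K (outSync K π h) := by
  rcases outSync_spec K π h with ⟨h1, h2, h3, hE⟩ | ⟨hf, h1, h2, hdet, hE⟩ |
    ⟨p, q, d, e, hd, he, h1, hbr, hE⟩ <;> rw [hE] <;>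
    refine ⟨fun c hc => ?_, fun c y hc => ?_, fun p' q' c y₀ y₁ hc => ?_⟩
  · cases hc
    exact K.hm' π _ (Option.some_get h).symm h2
  · exact (by cases hc)
  · exact (by cases hc)
  · exact (by cases hc)
  · cases hc
    show Det ndet kdet _ (outSync K (π ++ [false]) hf).conf
    rw [conf_sync]
    exact hdet
  · exact (by cases hc)
  · exact (by cases hc)
  · exact (by cases hc)
  · cases hc
    show branch _ (_, (outSync K (π ++ [false]) _).conf) (_, (outSync K (π ++ [true]) _).conf)
    rw [conf_sync, conf_sync]
    simp only [hd, he, Option.get_some]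
    exact hbr

theorem sfs_pend (K : Ctx ndet kdet branch) : ∀ s : PD K, SFS K (outPend K s) := by
  intro s
  induction s using (InvImage.wf (fun s : PD K => s.a) K.wfK).induction with
  | _ s IH =>
    rcases outPend_spec K s with ⟨hf, h1, h2, hlab, hE⟩ | ⟨hf, h1, h2, hdet, hE⟩ |
      ⟨hf, hk, hab', h1, h2, hE⟩ | ⟨hf, f, haf, h1, h2, hbf, hE⟩ |
      ⟨p, q, d, e, d', e', hd, he, hdd', hee', hpq, hbrA, hbrB, hE⟩
    · rw [hE]; exact sfs_sync K _ _
    · rw [hE]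
      refine ⟨fun c hc => (by cases hc), fun c y hc => ?_,
        fun p' q' c y₀ y₁ hc => (by cases hc)⟩
      cases hc
      show Det ndet kdet _ (outSync K (s.π ++ [false]) hf).conf
      rw [conf_sync]
      exact hdet
    · rw [hE]; exact IH _ hk
    · rw [hE]
      refine ⟨fun c hc => (by cases hc), fun c y hc => ?_,
        fun p' q' c y₀ y₁ hc => (by cases hc)⟩
      cases hc
      show Det ndet kdet _ (outPend K _).conf
      rw [conf_pend]
      exact hbf
    · rw [hE]
      refine ⟨fun c hc => (by cases hc), fun c y hc => (by cases hc),
        fun p' q' c y₀ y₁ hc => ?_⟩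
      cases hc
      show branch _ (_, (outPend K _).conf) (_, (outPend K _).conf)
      rw [conf_pend, conf_pend]
      exact hbrB

theorem sfacts (K : Ctx ndet kdet branch) (x : St K) : SFS K (out K x) := by
  cases x with
  | sync π h => exact sfs_sync K π h
  | pend π a b ha hab => exact sfs_pend K ⟨π, a, b, ha, hab⟩
  | bp π i a q₀ q₁ e₀ e₁ ha hbr =>
    have hout : out K (.bp π i a q₀ q₁ e₀ e₁ ha hbr) =
        bif i then (bpCore K π a q₀ q₁ e₀ e₁ ha hbr).2
        else (bpCore K π a q₀ q₁ e₀ e₁ ha hbr).1 := rfl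
    rcases bpCore_spec K π a q₀ q₁ e₀ e₁ ha hbr with
      ⟨hd, he, _, hl₀, hl₁, hE⟩ |
      ⟨d, t, u, s₀, s₁, c₀, c₁, hc₀, hc₁, h3, h4, hpq, hbrT, hb0, hb1, h5, hE⟩ |
      ⟨a₁, ha₁, d', e', hbr', h1, h2, haa₁, h0', h1', hE⟩
    · rw [hout, hE]
      cases i
      · exact sfs_sync K _ _
      · exact sfs_sync K _ _
    · rw [hout, hE]
      cases i <;>
        refine ⟨fun c hc => (by cases hc), fun c y hc => (by cases hc),
          fun p' q' c y₀ y₁ hc => ?_⟩ <;> cases hc <;>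
        simp only [conf_bp] <;> [exact hb0; exact hb1]
    · rw [hout, hE]
      cases i <;>
        refine ⟨fun c hc => (by cases hc), fun c y hc => ?_,
          fun p' q' c y₀ y₁ hc => (by cases hc)⟩ <;> cases hc <;>
        simp only [conf_bp] <;> [exact h0'; exact h1']

theorem runL_cons (x : St K) (b : Bool) (l : List Bool) :
    runL K x (b :: l) = (match out K x with
      | .leaf _ => none
      | .one _ y => bif b then none else runL K y l
      | .two _ _ _ y₀ y₁ => runL K (bif b then y₁ else y₀) l) := rfl

theorem runP_cons (x : St K) (b : Bool) (l : List Bool) :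
    runP K x (b :: l) = (match out K x with
      | .leaf _ => none
      | .one _ y => bif b then none else runP K y l
      | .two _ _ _ y₀ y₁ => runP K (bif b then y₁ else y₀) l) := rfl

theorem runP_nil (x : St K) :
    runP K x [] = (match out K x with
      | .two p q _ _ _ => some (p, q)
      | _ => none) := rfl

theorem append_cons (π : List Bool) (b : Bool) (l : List Bool) :
    π ++ b :: l = (π ++ [b]) ++ l := by simp

theorem realize_valid (K : Ctx ndet kdet branch) (x : St K) :
    (realize K x).Valid (Det ndet kdet) branch := by
  constructor
  · rfl
  · -- none_child
    show ∀ l, runL K x l = none → runL K x (l ++ [false]) = none ∧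
      runL K x (l ++ [true]) = none ∧ runP K x l = none
    intro l
    induction l generalizing x with
    | nil => intro h; exact absurd h (by simp [runL])
    | cons b l IH =>
      intro h
      rcases hx : out K x with c | ⟨c, y⟩ | ⟨p, q, c, y₀, y₁⟩
      · refine ⟨?_, ?_, ?_⟩ <;> simp [runL_cons, runP_cons, hx]
      · cases b
        · rw [runL_cons, hx] at h
          simp only at h
          have := IH y h
          refine ⟨?_, ?_, ?_⟩ <;>
            simp only [List.cons_append, runL_cons, runP_cons, hx] <;>
            [exact this.1; exact this.2.1; exact this.2.2]
        · refine ⟨?_, ?_, ?_⟩ <;> simp [runL_cons, runP_cons, hx]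
      · rw [runL_cons, hx] at h
        have := IH (bif b then y₁ else y₀) h
        refine ⟨?_, ?_, ?_⟩ <;>
          simp only [List.cons_append, runL_cons, runP_cons, hx] <;>
          [exact this.1; exact this.2.1; exact this.2.2]
  · -- right_imp_left
    show ∀ l, (runL K x (l ++ [true])).isSome → (runL K x (l ++ [false])).isSome
    intro l
    induction l generalizing x with
    | nil =>
      intro h
      simp only [List.nil_append] at h ⊢
      rcases hx : out K x with c | ⟨c, y⟩ | ⟨p, q, c, y₀, y₁⟩
      · rw [runL_cons, hx] at h
        simp at h
      · rw [runL_cons, hx] at h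
        simp at h
      · rw [runL_cons, hx]
        simp [runL]
    | cons b l IH =>
      intro h
      rcases hx : out K x with c | ⟨c, y⟩ | ⟨p, q, c, y₀, y₁⟩
      · rw [List.cons_append, runL_cons, hx] at h
        simp at h
      · cases b
        · rw [List.cons_append, runL_cons, hx] at h
          rw [List.cons_append, runL_cons, hx]
          exact IH y h
        · rw [List.cons_append, runL_cons, hx] at h
          simp at h
      · rw [List.cons_append, runL_cons, hx] at h
        rw [List.cons_append, runL_cons, hx]
        exact IH _ h
  · -- det_step
    show ∀ l c d, runL K x l = some c → runL K x (l ++ [false]) = some d →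
      runL K x (l ++ [true]) = none → runP K x l = none ∧ Det ndet kdet c d
    intro l
    induction l generalizing x with
    | nil =>
      intro c d hc hd ht
      simp only [List.nil_append] at hd ht ⊢
      rcases hx : out K x with c' | ⟨c', y⟩ | ⟨p, q, c', y₀, y₁⟩
      · rw [runL_cons, hx] at hd
        simp at hd
      · have hcc : c = c' := by
          simp only [runL, hx, Option.some.injEq] at hc
          exact hc.symm
        rw [runL_cons, hx] at hd
        simp only [cond] at hd
        have hdy : d = (out K y).conf := by
          simp only [runL, Option.some.injEq] at hd
          exact hd.symm
        refine ⟨by rw [runP_nil, hx], ?_⟩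
        rw [hcc, hdy]
        exact (sfacts K x).2.1 c' y hx
      · rw [runL_cons, hx] at ht
        simp only [cond] at ht
        exact absurd ht (by simp [runL])
    | cons b l IH =>
      intro c d hc hd ht
      rcases hx : out K x with c' | ⟨c', y⟩ | ⟨p, q, c', y₀, y₁⟩
      · rw [runL_cons, hx] at hc
        simp at hc
      · cases b
        · rw [runL_cons, hx] at hc
          rw [List.cons_append, runL_cons, hx] at hd
          rw [List.cons_append, runL_cons, hx] at ht
          simp only [cond] at hc hd ht
          have := IH y c d hc hd ht
          refine ⟨?_, this.2⟩
          rw [runP_cons, hx]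
          simpa using this.1
        · rw [runL_cons, hx] at hc
          simp at hc
      · rw [runL_cons, hx] at hc
        rw [List.cons_append, runL_cons, hx] at hd
        rw [List.cons_append, runL_cons, hx] at ht
        have := IH (bif b then y₁ else y₀) c d hc hd ht
        refine ⟨?_, this.2⟩
        rw [runP_cons, hx]
        exact this.1
  · -- branch_step
    show ∀ l c, runL K x l = some c → (runP K x l).isSome → ∃ p q d e,
      runP K x l = some (p, q) ∧ runL K x (l ++ [false]) = some d ∧
      runL K x (l ++ [true]) = some e ∧ branch c (p, d) (q, e)
    intro l
    induction l generalizing x with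
    | nil =>
      intro c hc hpr
      simp only [List.nil_append]
      rcases hx : out K x with c' | ⟨c', y⟩ | ⟨p, q, c', y₀, y₁⟩
      · rw [runP_nil, hx] at hpr
        simp at hpr
      · rw [runP_nil, hx] at hpr
        simp at hpr
      · have hcc : c = c' := by
          simp only [runL, hx, Option.some.injEq] at hc
          exact hc.symm
        refine ⟨p, q, (out K y₀).conf, (out K y₁).conf, by rw [runP_nil, hx], ?_, ?_, ?_⟩
        · rw [runL_cons, hx]; rfl
        · rw [runL_cons, hx]; rfl
        · rw [hcc]
          exact (sfacts K x).2.2 p q c' y₀ y₁ hx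
    | cons b l IH =>
      intro c hc hpr
      rcases hx : out K x with c' | ⟨c', y⟩ | ⟨p, q, c', y₀, y₁⟩
      · rw [runL_cons, hx] at hc
        simp at hc
      · cases b
        · rw [runL_cons, hx] at hc
          rw [runP_cons, hx] at hpr
          simp only [cond] at hc hpr
          obtain ⟨p, q, d, e, h1, h2, h3, h4⟩ := IH y c hc hpr
          refine ⟨p, q, d, e, ?_, ?_, ?_, h4⟩ <;>
            simp only [List.cons_append, runL_cons, runP_cons, hx] <;> assumption
        · rw [runL_cons, hx] at hc
          simp at hc
      · rw [runL_cons, hx] at hc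
        rw [runP_cons, hx] at hpr
        obtain ⟨p', q', d, e, h1, h2, h3, h4⟩ := IH (bif b then y₁ else y₀) c hc hpr
        refine ⟨p', q', d, e, ?_, ?_, ?_, h4⟩ <;>
          simp only [List.cons_append, runL_cons, runP_cons, hx] <;> assumption
  · -- pr_of_two
    show ∀ l, (runL K x (l ++ [true])).isSome → (runP K x l).isSome
    intro l
    induction l generalizing x with
    | nil =>
      intro h
      simp only [List.nil_append] at h ⊢
      rcases hx : out K x with c' | ⟨c', y⟩ | ⟨p, q, c', y₀, y₁⟩
      · rw [runL_cons, hx] at h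
        simp at h
      · rw [runL_cons, hx] at h
        simp at h
      · rw [runP_nil, hx]
        rfl
    | cons b l IH =>
      intro h
      rcases hx : out K x with c' | ⟨c', y⟩ | ⟨p, q, c', y₀, y₁⟩
      · rw [List.cons_append, runL_cons, hx] at h
        simp at h
      · cases b
        · rw [List.cons_append, runL_cons, hx] at h
          rw [runP_cons, hx]
          exact IH y h
        · rw [List.cons_append, runL_cons, hx] at h
          simp at h
      · rw [List.cons_append, runL_cons, hx] at h
        rw [runP_cons, hx]
        exact IH _ h

theorem realize_maximal (K : Ctx ndet kdet branch) (x : St K) :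
    (realize K x).Maximal (IsNF (Det ndet kdet) branch) := by
  show ∀ l c, runL K x l = some c → runL K x (l ++ [false]) = none →
    IsNF (Det ndet kdet) branch c
  intro l
  induction l generalizing x with
  | nil =>
    intro c hc hleaf
    simp only [List.nil_append] at hleaf
    rcases hx : out K x with c' | ⟨c', y⟩ | ⟨p, q, c', y₀, y₁⟩
    · have hcc : c = c' := by
        simp only [runL, hx, Option.some.injEq] at hc
        exact hc.symm
      rw [hcc]
      exact (sfacts K x).1 c' hx
    · rw [runL_cons, hx] at hleaf
      simp only [cond] at hleaf
      exact absurd hleaf (by simp [runL])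
    · rw [runL_cons, hx] at hleaf
      exact absurd hleaf (by simp [runL])
  | cons b l IH =>
    intro c hc hleaf
    rcases hx : out K x with c' | ⟨c', y⟩ | ⟨p, q, c', y₀, y₁⟩
    · rw [runL_cons, hx] at hc
      simp at hc
    · cases b
      · rw [runL_cons, hx] at hc
        rw [List.cons_append, runL_cons, hx] at hleaf
        exact IH y c hc hleaf
      · rw [runL_cons, hx] at hc
        simp at hc
    · rw [runL_cons, hx] at hc
      rw [List.cons_append, runL_cons, hx] at hleaf
      exact IH _ c hc hleaf

end SC

namespace SC
variable {σ : Type}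
variable {ndet kdet : σ → σ → Prop} {branch : σ → ℝ × σ → ℝ × σ → Prop}
variable {K : Ctx ndet kdet branch}

/-- subtree of a `PT` at a position -/
def sub (T : PT σ) (π : List Bool) : PT σ :=
  ⟨fun l => T.label (π ++ l), fun l => T.pr (π ++ l)⟩

theorem sub_nil (T : PT σ) : sub T [] = T := rfl

theorem sub_child (T : PT σ) (π : List Bool) (b : Bool) :
    (sub T π).child b = sub T (π ++ [b]) := by
  unfold PT.child sub
  congr 1 <;> funext l <;> rw [← append_cons]

theorem label_none_ext {T : PT σ} (hv : T.Valid (Det ndet kdet) branch) {π : List Bool}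
    (h : T.label π = none) : ∀ l, T.label (π ++ l) = none := by
  intro l
  induction l generalizing π with
  | nil => simpa using h
  | cons b l IH =>
    rw [append_cons]
    refine IH ?_
    cases b
    · exact (hv.none_child π h).1
    · exact (hv.none_child π h).2.1

theorem subcomp_congr {F : FT σ} {X Y : PT σ} (h : SubComp F X)
    (hl : ∀ l, X.label l = Y.label l) (hp : ∀ l, X.pr l = Y.pr l) : SubComp F Y := by
  induction h generalizing Y with
  | leaf h1 => exact .leaf ((hl _) ▸ h1)
  | one h1 h2 h3 h4 _ IH =>
    exact .one ((hl _) ▸ h1) ((hp _) ▸ h2) ((hl _) ▸ h3) ((hl _) ▸ h4)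
      (IH (fun l => hl _) (fun l => hp _))
  | two h1 h2 _ _ IH1 IH2 =>
    exact .two ((hl _) ▸ h1) ((hp _) ▸ h2) (IH1 (fun l => hl _) (fun l => hp _))
      (IH2 (fun l => hl _) (fun l => hp _))

theorem runL_sync (K : Ctx ndet kdet branch) :
    ∀ (l π : List Bool) (h : (K.T'.label π).isSome),
      runL K (.sync π h) l = K.T'.label (π ++ l) := by
  intro l
  induction l with
  | nil =>
    intro π h
    show some (outSync K π h).conf = _
    rw [conf_sync, List.append_nil, Option.some_get]
  | cons b l IH =>
    intro π h
    rw [append_cons, runL_cons]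
    rcases outSync_spec K π h with ⟨h1, h2, h3, hE⟩ | ⟨hf, h1, h2, hdet, hE⟩ |
      ⟨p, q, d, e, hd, he, h1, hbr, hE⟩
    · rw [show out K (.sync π h) = outSync K π h from rfl, hE]
      cases b
      · exact (label_none_ext K.hv' h2 l).symm
      · exact (label_none_ext K.hv' h3 l).symm
    · rw [show out K (.sync π h) = outSync K π h from rfl, hE]
      cases b
      · exact IH (π ++ [false]) hf
      · exact (label_none_ext K.hv' h2 l).symm
    · rw [show out K (.sync π h) = outSync K π h from rfl, hE]
      cases b
      · exact IH (π ++ [false]) _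
      · exact IH (π ++ [true]) _

theorem runP_sync (K : Ctx ndet kdet branch) :
    ∀ (l π : List Bool) (h : (K.T'.label π).isSome),
      runP K (.sync π h) l = K.T'.pr (π ++ l) := by
  intro l
  induction l with
  | nil =>
    intro π h
    rw [runP_nil, List.append_nil]
    rcases outSync_spec K π h with ⟨h1, h2, h3, hE⟩ | ⟨hf, h1, h2, hdet, hE⟩ |
      ⟨p, q, d, e, hd, he, h1, hbr, hE⟩ <;>
      rw [show out K (.sync π h) = outSync K π h from rfl, hE] <;> simp [h1]
  | cons b l IH =>
    intro π h
    rw [append_cons, runP_cons]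
    rcases outSync_spec K π h with ⟨h1, h2, h3, hE⟩ | ⟨hf, h1, h2, hdet, hE⟩ |
      ⟨p, q, d, e, hd, he, h1, hbr, hE⟩
    · rw [show out K (.sync π h) = outSync K π h from rfl, hE]
      cases b
      · exact ((K.hv'.none_child _ (label_none_ext K.hv' h2 l)).2.2).symm
      · exact ((K.hv'.none_child _ (label_none_ext K.hv' h3 l)).2.2).symm
    · rw [show out K (.sync π h) = outSync K π h from rfl, hE]
      cases b
      · exact IH (π ++ [false]) hf
      · exact ((K.hv'.none_child _ (label_none_ext K.hv' h2 l)).2.2).symm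
    · rw [show out K (.sync π h) = outSync K π h from rfl, hE]
      cases b
      · exact IH (π ++ [false]) _
      · exact IH (π ++ [true]) _

theorem subcomp_sync {K : Ctx ndet kdet branch} {F : FT σ} {π : List Bool}
    {h : (K.T'.label π).isSome} (hs : SubComp F (realize K (.sync π h))) :
    SubComp F (sub K.T' π) :=
  subcomp_congr hs (fun l => runL_sync K l π h) (fun l => runP_sync K l π h)

theorem realize_out_congr {K : Ctx ndet kdet branch} {x y : St K}
    (hxy : out K x = out K y) {F : FT σ} (h : SubComp F (realize K x)) :
    SubComp F (realize K y) := by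
  refine subcomp_congr h (fun l => ?_) (fun l => ?_)
  · cases l with
    | nil => show some (out K x).conf = some (out K y).conf; rw [hxy]
    | cons b l =>
      show runL K x (b :: l) = runL K y (b :: l)
      rw [runL_cons, runL_cons, hxy]
  · cases l with
    | nil =>
      show runP K x [] = runP K y []
      rw [runP_nil, runP_nil, hxy]
    | cons b l =>
      show runP K x (b :: l) = runP K y (b :: l)
      rw [runP_cons, runP_cons, hxy]

theorem child_realize {K : Ctx ndet kdet branch} {x y : St K} {b : Bool}
    (hy : (match out K x with
      | Shp.leaf _ => none
      | Shp.one _ y' => bif b then none else some y'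
      | Shp.two _ _ _ y₀ y₁ => some (bif b then y₁ else y₀)) = some y) :
    ∀ l, ((realize K x).child b).label l = (realize K y).label l ∧
      ((realize K x).child b).pr l = (realize K y).pr l := by
  intro l
  constructor
  · show runL K x (b :: l) = runL K y l
    rw [runL_cons]
    rcases hx : out K x with c | ⟨c, y'⟩ | ⟨p, q, c, y₀, y₁⟩ <;> rw [hx] at hy
    · simp at hy
    · cases b
      · simp only [Bool.cond_false, Option.some.injEq] at hy
        subst hy; rfl
      · simp at hy
    · simp only [Option.some.injEq] at hy
      subst hy; rfl
  · show runP K x (b :: l) = runP K y l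
    rw [runP_cons]
    rcases hx : out K x with c | ⟨c, y'⟩ | ⟨p, q, c, y₀, y₁⟩ <;> rw [hx] at hy
    · simp at hy
    · cases b
      · simp only [Bool.cond_false, Option.some.injEq] at hy
        subst hy; rfl
      · simp at hy
    · simp only [Option.some.injEq] at hy
      subst hy; rfl

theorem subcomp_inv_leaf {K : Ctx ndet kdet branch} {x : St K} {c : σ} {F : FT σ}
    (hx : out K x = .leaf c) (h : SubComp F (realize K x)) : F = .leaf c := by
  cases h with
  | leaf h1 =>
    rename_i c'
    have h1' : some (out K x).conf = some c' := h1
    rw [hx] at h1'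
    have hc : c = c' := Option.some_inj.mp h1'
    rw [hc]
  | one h1 h2 h3 h4 h5 =>
    exfalso
    have h3' : (runL K x (false :: [])).isSome = true := h3
    rw [runL_cons, hx] at h3'
    simp at h3'
  | two h1 h2 h3 h4 =>
    exfalso
    have h2' : runP K x [] = some _ := h2
    rw [runP_nil, hx] at h2'
    simp at h2'

theorem subcomp_inv_one {K : Ctx ndet kdet branch} {x y : St K} {c : σ} {F : FT σ}
    (hx : out K x = .one c y) (h : SubComp F (realize K x)) :
    F = .leaf c ∨ ∃ F₁, F = .one c F₁ ∧ SubComp F₁ (realize K y) := by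
  cases h with
  | leaf h1 =>
    rename_i c'
    left
    have h1' : some (out K x).conf = some c' := h1
    rw [hx] at h1'
    have hc : c = c' := Option.some_inj.mp h1'
    rw [hc]
  | one h1 h2 h3 h4 h5 =>
    rename_i c' F₁
    right
    have h1' : some (out K x).conf = some c' := h1
    rw [hx] at h1'
    have hc : c = c' := Option.some_inj.mp h1'
    subst hc
    refine ⟨F₁, rfl, ?_⟩
    refine subcomp_congr h5 (fun l => (child_realize ?_ l).1) (fun l => (child_realize ?_ l).2)
      <;> rw [hx] <;> rfl
  | two h1 h2 h3 h4 =>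
    exfalso
    have h2' : runP K x [] = some _ := h2
    rw [runP_nil, hx] at h2'
    simp at h2'

theorem subcomp_inv_two {K : Ctx ndet kdet branch} {x y₀ y₁ : St K} {c : σ} {p q : ℝ}
    {F : FT σ} (hx : out K x = .two p q c y₀ y₁) (h : SubComp F (realize K x)) :
    F = .leaf c ∨ ∃ F₀ F₁, F = .two p q c F₀ F₁ ∧ SubComp F₀ (realize K y₀) ∧
      SubComp F₁ (realize K y₁) := by
  cases h with
  | leaf h1 =>
    rename_i c'
    left
    have h1' : some (out K x).conf = some c' := h1
    rw [hx] at h1'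
    have hc : c = c' := Option.some_inj.mp h1'
    rw [hc]
  | one h1 h2 h3 h4 h5 =>
    exfalso
    have h2' : runP K x [] = none := h2
    rw [runP_nil, hx] at h2'
    simp at h2'
  | two h1 h2 h3 h4 =>
    rename_i p' q' c' F₀ F₁
    right
    have h1' : some (out K x).conf = some c' := h1
    rw [hx] at h1'
    have hc : c = c' := Option.some_inj.mp h1'
    subst hc
    have h2' : runP K x [] = some (p', q') := h2
    rw [runP_nil, hx] at h2'
    simp only [Option.some.injEq, Prod.mk.injEq] at h2'
    obtain ⟨hp, hq⟩ := h2'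
    subst hp; subst hq
    refine ⟨F₀, F₁, rfl, ?_, ?_⟩
    · refine subcomp_congr h3 (fun l => (child_realize ?_ l).1) (fun l => (child_realize ?_ l).2)
        <;> rw [hx] <;> rfl
    · refine subcomp_congr h4 (fun l => (child_realize ?_ l).1) (fun l => (child_realize ?_ l).2)
        <;> rw [hx] <;> rfl

theorem subcomp_sub_leaf {T : PT σ} {π : List Bool} {c : σ} (h : T.label π = some c) :
    SubComp (.leaf c) (sub T π) :=
  .leaf (by rw [show (sub T π).label [] = T.label (π ++ []) from rfl, List.append_nil]; exact h)

theorem subcomp_sub_one {T : PT σ} {π : List Bool} {c : σ} {G : FT σ}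
    (hπ : T.label π = some c) (hpr : T.pr π = none)
    (hf : (T.label (π ++ [false])).isSome) (ht : T.label (π ++ [true]) = none)
    (h : SubComp G (sub T (π ++ [false]))) : SubComp (.one c G) (sub T π) := by
  refine SubComp.one ?_ ?_ ?_ ?_ ?_
  · rw [show (sub T π).label [] = T.label (π ++ []) from rfl, List.append_nil]; exact hπ
  · rw [show (sub T π).pr [] = T.pr (π ++ []) from rfl, List.append_nil]; exact hpr
  · exact hf
  · exact ht
  · rw [sub_child]; exact h

theorem subcomp_sub_two {T : PT σ} {π : List Bool} {c : σ} {p q : ℝ} {G₀ G₁ : FT σ}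
    (hπ : T.label π = some c) (hpr : T.pr π = some (p, q))
    (h₀ : SubComp G₀ (sub T (π ++ [false]))) (h₁ : SubComp G₁ (sub T (π ++ [true]))) :
    SubComp (.two p q c G₀ G₁) (sub T π) := by
  refine SubComp.two ?_ ?_ ?_ ?_
  · rw [show (sub T π).label [] = T.label (π ++ []) from rfl, List.append_nil]; exact hπ
  · rw [show (sub T π).pr [] = T.pr (π ++ []) from rfl, List.append_nil]; exact hpr
  · rw [sub_child]; exact h₀
  · rw [sub_child]; exact h₁

end SC

namespace SC
variable {σ : Type}
variable {ndet kdet : σ → σ → Prop} {branch : σ → ℝ × σ → ℝ × σ → Prop}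
variable {K : Ctx ndet kdet branch}

theorem valid_child {X : PT σ} {d : σ → σ → Prop} {br : σ → ℝ × σ → ℝ × σ → Prop}
    (hv : X.Valid d br) (b : Bool) (hb : ((X.child b).label []).isSome) :
    (X.child b).Valid d br := by
  refine ⟨hb, fun l h => ?_, fun l h => ?_, fun l c e h1 h2 h3 => ?_, fun l c h1 h2 => ?_,
    fun l h => ?_⟩
  · exact hv.none_child (b :: l) h
  · exact hv.right_imp_left (b :: l) h
  · exact hv.det_step (b :: l) c e h1 h2 h3
  · exact hv.branch_step (b :: l) c h1 h2
  · exact hv.pr_of_two (b :: l) h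

theorem maximal_child {X : PT σ} {NF : σ → Prop} (hm : X.Maximal NF) (b : Bool) :
    (X.child b).Maximal NF := fun l c h1 h2 => hm (b :: l) c h1 h2

/-- size of a finite computation -/
def sz : FT σ → ℕ
  | .leaf _ => 0
  | .one _ F => sz F + 1
  | .two _ _ _ F G => sz F + sz G + 1

section Val
variable {M : Type} [AddCommMonoid M] [PartialOrder M] [IsOrderedAddMonoid M]

/-- generic quantity of a finite computation -/
def val (sc : ℝ → M → M) (wt : σ → M) : FT σ → M
  | .leaf c => wt c
  | .one _ F => val sc wt F
  | .two p q _ F G => sc p (val sc wt F) + sc q (val sc wt G)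

/-- axioms for the scalar action and the weight -/
structure SCK (ndet kdet : σ → σ → Prop) (branch : σ → ℝ × σ → ℝ × σ → Prop)
    (sc : ℝ → M → M) (wt : σ → M) : Prop where
  sc_add : ∀ (a : ℝ) (x y : M), sc a (x + y) = sc a x + sc a y
  sc_sc : ∀ (a b : ℝ) (x : M), sc a (sc b x) = sc (a * b) x
  sc_congr : ∀ (a b : ℝ) (x : M), a = b → sc a x = sc b x
  sc_mono : ∀ (a : ℝ) (x y : M), 0 ≤ a → x ≤ y → sc a x ≤ sc a y
  sc_nonneg : ∀ (a : ℝ) (x : M), 0 ≤ a → 0 ≤ x → 0 ≤ sc a x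
  sc_zero : ∀ a : ℝ, sc a 0 = 0
  wt_nonneg : ∀ c, 0 ≤ wt c
  wt_support : ∀ c, wt c ≠ 0 → IsNF (Det ndet kdet) branch c

variable {sc : ℝ → M → M} {wt : σ → M}

theorem val_nonneg (K : Ctx ndet kdet branch) (S : SCK ndet kdet branch sc wt) :
    ∀ {H : FT σ} {X : PT σ}, SubComp H X → X.Valid (Det ndet kdet) branch →
      0 ≤ val sc wt H := by
  intro H X h
  induction h with
  | leaf h1 => intro _; exact S.wt_nonneg _
  | one h1 h2 h3 h4 h5 IH =>
    intro hvX
    exact IH (valid_child hvX false h3)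
  | two h1 h2 h3 h4 IH1 IH2 =>
    rename_i p q c T F G
    intro hvX
    obtain ⟨p', q', d, e, hpq, hd, he, hbr⟩ := hvX.branch_step [] c h1 (by rw [h2]; rfl)
    rw [h2] at hpq
    simp only [Option.some.injEq, Prod.mk.injEq] at hpq
    obtain ⟨hp, hq⟩ := hpq
    subst hp; subst hq
    obtain ⟨hp0, hq0, _⟩ := K.hsum _ _ _ _ _ hbr
    simp only [List.nil_append] at hd he
    have h0 : (0 : M) ≤ val sc wt F := IH1 (valid_child hvX false
      (by rw [show (T.child false).label [] = T.label [false] from rfl, hd]; rfl))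
    have h1' : (0 : M) ≤ val sc wt G := IH2 (valid_child hvX true
      (by rw [show (T.child true).label [] = T.label [true] from rfl, he]; rfl))
    have := add_le_add (S.sc_nonneg p _ hp0 h0) (S.sc_nonneg q _ hq0 h1')
    rw [add_zero] at this; exact this

theorem dom_sync (K : Ctx ndet kdet branch) {sc : ℝ → M → M} {wt : σ → M} {F : FT σ}
    {π : List Bool} {h : (K.T'.label π).isSome}
    (hs : SubComp F (realize K (.sync π h))) :
    ∃ G, SubComp G (sub K.T' π) ∧ val sc wt F ≤ val sc wt G :=
  ⟨F, subcomp_sync hs, le_refl _⟩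

theorem dom_pend (K : Ctx ndet kdet branch) (S : SCK ndet kdet branch sc wt) :
    ∀ n : ℕ, ∀ s : PD K, ∀ H : FT σ, sz H ≤ n →
      SubComp H (realize K (.pend s.π s.a s.b s.ha s.hab)) →
      ∃ G, SubComp G (sub K.T' s.π) ∧ val sc wt H ≤ val sc wt G := by
  intro n
  induction n using Nat.strong_induction_on with
  | _ n IHn =>
  intro s
  induction s using (InvImage.wf (fun s : PD K => s.a) K.wfK).induction with
  | _ s IHs =>
  intro H hsz hsub
  have hxout : out K (.pend s.π s.a s.b s.ha s.hab) = outPend K s := rfl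
  rcases outPend_spec K s with ⟨hf, h1, h2, hlab, hE⟩ | ⟨hf, h1, h2, hdet, hE⟩ |
    ⟨hf, hk, hab', h1, h2, hE⟩ | ⟨hf, f, haf, h1, h2, hbf, hE⟩ |
    ⟨p, q, d, e, d', e', hd, he, hdd', hee', hpq, hbrA, hbrB, hE⟩
  · -- sync case
    have : SubComp H (realize K (.sync (s.π ++ [false]) hf)) :=
      realize_out_congr (by rw [hxout, hE]; rfl) hsub
    refine ⟨.one s.a H, subcomp_sub_one s.ha h1 hf h2 (subcomp_sync this), le_refl _⟩
  · -- step-to-child case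
    rcases subcomp_inv_one (by rw [hxout, hE]) hsub with hleaf | ⟨H₁, hH, hsub₁⟩
    · -- H is the leaf s.b
      subst hleaf
      by_cases hwt : wt s.b = 0
      · refine ⟨.leaf s.a, subcomp_sub_leaf s.ha, ?_⟩
        show wt s.b ≤ wt s.a
        rw [hwt]; exact S.wt_nonneg _
      · exact absurd hdet ((S.wt_support s.b hwt).1 _)
    · subst hH
      refine ⟨.one s.a H₁, subcomp_sub_one s.ha h1 hf h2 (subcomp_sync hsub₁), le_refl _⟩
  · -- unproductive kdet case
    have : SubComp H (realize K (.pend (s.π ++ [false]) _ s.b (Option.some_get hf).symm hab')) :=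
      realize_out_congr (by rw [hxout, hE]; rfl) hsub
    obtain ⟨G, hG, hval⟩ := IHs ⟨s.π ++ [false], _, s.b, (Option.some_get hf).symm, hab'⟩ hk H hsz this
    exact ⟨.one s.a G, subcomp_sub_one s.ha h1 hf h2 hG, hval⟩
  · -- square case
    rcases subcomp_inv_one (by rw [hxout, hE]) hsub with hleaf | ⟨H₁, hH, hsub₁⟩
    · subst hleaf
      by_cases hwt : wt s.b = 0
      · refine ⟨.leaf s.a, subcomp_sub_leaf s.ha, ?_⟩
        show wt s.b ≤ wt s.a
        rw [hwt]; exact S.wt_nonneg _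
      · exact absurd hbf ((S.wt_support s.b hwt).1 _)
    · subst hH
      obtain ⟨G, hG, hval⟩ := IHn (sz H₁) (by
        simp only [sz] at hsz; omega)
        ⟨s.π ++ [false], _, f, (Option.some_get hf).symm, haf⟩ H₁ le_rfl hsub₁
      exact ⟨.one s.a G, subcomp_sub_one s.ha h1 hf h2 hG,
        by show val sc wt H₁ ≤ _; exact hval⟩
  · -- branching case
    rcases subcomp_inv_two (by rw [hxout, hE]) hsub with hleaf | ⟨H₀, H₁, hH, hsub₀, hsub₁⟩
    · subst hleaf
      by_cases hwt : wt s.b = 0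
      · refine ⟨.leaf s.a, subcomp_sub_leaf s.ha, ?_⟩
        show wt s.b ≤ wt s.a
        rw [hwt]; exact S.wt_nonneg _
      · exact absurd hbrB (((S.wt_support s.b hwt).2) _ _)
    · subst hH
      obtain ⟨hp0, hq0, _⟩ := K.hsum _ _ _ _ _ hbrA
      obtain ⟨G₀, hG₀, hv₀⟩ := IHn (sz H₀) (by simp only [sz] at hsz; omega)
        ⟨s.π ++ [false], d, d', hd, hdd'⟩ H₀ le_rfl hsub₀
      obtain ⟨G₁, hG₁, hv₁⟩ := IHn (sz H₁) (by simp only [sz] at hsz; omega)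
        ⟨s.π ++ [true], e, e', he, hee'⟩ H₁ le_rfl hsub₁
      refine ⟨.two p q s.a G₀ G₁, subcomp_sub_two s.ha hpq hG₀ hG₁, ?_⟩
      show sc p (val sc wt H₀) + sc q (val sc wt H₁) ≤
        sc p (val sc wt G₀) + sc q (val sc wt G₁)
      exact add_le_add (S.sc_mono p _ _ hp0 hv₀) (S.sc_mono q _ _ hq0 hv₁)

end Val
end SC

namespace SC
variable {σ : Type}
variable {ndet kdet : σ → σ → Prop} {branch : σ → ℝ × σ → ℝ × σ → Prop}
variable {K : Ctx ndet kdet branch}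
variable {M : Type} [AddCommMonoid M] [PartialOrder M] [IsOrderedAddMonoid M] {sc : ℝ → M → M} {wt : σ → M}

theorem dom_bp (K : Ctx ndet kdet branch) (S : SCK ndet kdet branch sc wt) :
    ∀ n : ℕ, ∀ (π : List Bool) (a : σ) (q₀ q₁ : ℝ) (e₀ e₁ : σ)
      (ha : K.T'.label π = some a) (hbr : branch a (q₀, e₀) (q₁, e₁)) (H₀ H₁ : FT σ),
      sz H₀ + sz H₁ ≤ n →
      SubComp H₀ (realize K (.bp π false a q₀ q₁ e₀ e₁ ha hbr)) →
      SubComp H₁ (realize K (.bp π true a q₀ q₁ e₀ e₁ ha hbr)) →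
      ∃ G, SubComp G (sub K.T' π) ∧
        sc q₀ (val sc wt H₀) + sc q₁ (val sc wt H₁) ≤ val sc wt G := by
  intro n
  induction n using Nat.strong_induction_on with
  | _ n IHn =>
  intro π a q₀ q₁ e₀ e₁ ha hbr H₀ H₁ hsz hsub₀ hsub₁
  obtain ⟨hq0, hq1, _⟩ := K.hsum _ _ _ _ _ hbr
  rcases bpCore_spec K π a q₀ q₁ e₀ e₁ ha hbr with
    ⟨hd, he, hpq, hl₀, hl₁, hE⟩ |
    ⟨d, t, u, s₀, s₁, c₀, c₁, hc₀, hc₁, h3, h4, hpq, hbrT, hb0, hb1, h5, hE⟩ |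
    ⟨a₁, ha₁, d', e', hbr', h1, h2, haa₁, h0', h1', hE⟩
  · -- identical case
    have hout0 : out K (.bp π false a q₀ q₁ e₀ e₁ ha hbr) =
        out K (.sync (π ++ [false]) hd) := by
      show (bpCore K π a q₀ q₁ e₀ e₁ ha hbr).1 = _; rw [hE]; rfl
    have hout1 : out K (.bp π true a q₀ q₁ e₀ e₁ ha hbr) =
        out K (.sync (π ++ [true]) he) := by
      show (bpCore K π a q₀ q₁ e₀ e₁ ha hbr).2 = _; rw [hE]; rfl
    have hs0 : SubComp H₀ (sub K.T' (π ++ [false])) :=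
      subcomp_sync (realize_out_congr hout0 hsub₀)
    have hs1 : SubComp H₁ (sub K.T' (π ++ [true])) :=
      subcomp_sync (realize_out_congr hout1 hsub₁)
    exact ⟨.two q₀ q₁ a H₀ H₁, subcomp_sub_two ha hpq hs0 hs1, le_refl _⟩
  · -- square case
    obtain ⟨hs0', hs1', _⟩ := K.hsum _ _ _ _ _ hbrT
    obtain ⟨ht00, ht01, _⟩ := K.hsum _ _ _ _ _ hb0
    obtain ⟨ht10, ht11, _⟩ := K.hsum _ _ _ _ _ hb1
    have hout0 : out K (.bp π false a q₀ q₁ e₀ e₁ ha hbr) =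
        Shp.two (t false false) (t false true) e₀
          (.bp (π ++ [false]) false c₀ (u false false) (u true false)
            (d false false) (d true false) hc₀ h3)
          (.bp (π ++ [true]) false c₁ (u false true) (u true true)
            (d false true) (d true true) hc₁ h4) := by
      show (bpCore K π a q₀ q₁ e₀ e₁ ha hbr).1 = _; rw [hE]
    have hout1 : out K (.bp π true a q₀ q₁ e₀ e₁ ha hbr) =
        Shp.two (t true false) (t true true) e₁
          (.bp (π ++ [false]) true c₀ (u false false) (u true false)
            (d false false) (d true false) hc₀ h3)
          (.bp (π ++ [true]) true c₁ (u false true) (u true true)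
            (d false true) (d true true) hc₁ h4) := by
      show (bpCore K π a q₀ q₁ e₀ e₁ ha hbr).2 = _; rw [hE]
    have h500 : q₀ * t false false = s₀ * u false false := by simpa using h5 false false
    have h501 : q₀ * t false true = s₁ * u false true := by simpa using h5 false true
    have h510 : q₁ * t true false = s₀ * u true false := by simpa using h5 true false
    have h511 : q₁ * t true true = s₁ * u true true := by simpa using h5 true true
    have main2 : ∀ K00 K01 K10 K11 : FT σ,
        SubComp K00 (realize K (.bp (π ++ [false]) false c₀ (u false false) (u true false)
          (d false false) (d true false) hc₀ h3)) →
        SubComp K01 (realize K (.bp (π ++ [true]) false c₁ (u false true) (u true true)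
          (d false true) (d true true) hc₁ h4)) →
        SubComp K10 (realize K (.bp (π ++ [false]) true c₀ (u false false) (u true false)
          (d false false) (d true false) hc₀ h3)) →
        SubComp K11 (realize K (.bp (π ++ [true]) true c₁ (u false true) (u true true)
          (d false true) (d true true) hc₁ h4)) →
        sz K00 + sz K01 + sz K10 + sz K11 < n →
        val sc wt H₀ ≤ sc (t false false) (val sc wt K00) + sc (t false true) (val sc wt K01) →
        val sc wt H₁ ≤ sc (t true false) (val sc wt K10) + sc (t true true) (val sc wt K11) →
        ∃ G, SubComp G (sub K.T' π) ∧
          sc q₀ (val sc wt H₀) + sc q₁ (val sc wt H₁) ≤ val sc wt G := by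
      intro K00 K01 K10 K11 hk00 hk01 hk10 hk11 hlt hv0 hv1
      obtain ⟨G₀, hG₀, hvG₀⟩ := IHn (sz K00 + sz K10) (by omega) (π ++ [false]) c₀
        (u false false) (u true false) (d false false) (d true false) hc₀ h3 K00 K10
        le_rfl hk00 hk10
      obtain ⟨G₁, hG₁, hvG₁⟩ := IHn (sz K01 + sz K11) (by omega) (π ++ [true]) c₁
        (u false true) (u true true) (d false true) (d true true) hc₁ h4 K01 K11
        le_rfl hk01 hk11
      refine ⟨.two s₀ s₁ a G₀ G₁, subcomp_sub_two ha hpq hG₀ hG₁, ?_⟩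
      show _ ≤ sc s₀ (val sc wt G₀) + sc s₁ (val sc wt G₁)
      calc sc q₀ (val sc wt H₀) + sc q₁ (val sc wt H₁)
          ≤ sc q₀ (sc (t false false) (val sc wt K00) + sc (t false true) (val sc wt K01)) +
            sc q₁ (sc (t true false) (val sc wt K10) + sc (t true true) (val sc wt K11)) :=
            add_le_add (S.sc_mono _ _ _ hq0 hv0) (S.sc_mono _ _ _ hq1 hv1)
        _ = sc s₀ (sc (u false false) (val sc wt K00) + sc (u true false) (val sc wt K10)) +
            sc s₁ (sc (u false true) (val sc wt K01) + sc (u true true) (val sc wt K11)) := by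
            rw [S.sc_add, S.sc_add, S.sc_add, S.sc_add, S.sc_sc, S.sc_sc, S.sc_sc, S.sc_sc,
              S.sc_sc, S.sc_sc, S.sc_sc, S.sc_sc, h500, h501, h510, h511]
            abel
        _ ≤ sc s₀ (val sc wt G₀) + sc s₁ (val sc wt G₁) :=
            add_le_add (S.sc_mono _ _ _ hs0' hvG₀) (S.sc_mono _ _ _ hs1' hvG₁)
    rcases subcomp_inv_two hout0 hsub₀ with hL0 | ⟨K00, K01, hH0, hk00, hk01⟩ <;>
      rcases subcomp_inv_two hout1 hsub₁ with hL1 | ⟨K10, K11, hH1, hk10, hk11⟩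
    · -- both leaves
      subst hL0; subst hL1
      by_cases hw0 : wt e₀ = 0
      · by_cases hw1 : wt e₁ = 0
        · refine ⟨.leaf a, subcomp_sub_leaf ha, ?_⟩
          show sc q₀ (wt e₀) + sc q₁ (wt e₁) ≤ wt a
          rw [hw0, hw1, S.sc_zero, S.sc_zero, add_zero]
          exact S.wt_nonneg a
        · exact absurd hb1 (((S.wt_support e₁ hw1).2) _ _)
      · exact absurd hb0 (((S.wt_support e₀ hw0).2) _ _)
    · -- leaf / two
      subst hL0; subst hH1
      by_cases hw0 : wt e₀ = 0
      · have hK00 : SubComp (FT.leaf (d false false)) (realize K (.bp (π ++ [false]) false c₀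
            (u false false) (u true false) (d false false) (d true false) hc₀ h3)) :=
          .leaf (by show some (out K _).conf = _; rw [conf_bp]; rfl)
        have hK01 : SubComp (FT.leaf (d false true)) (realize K (.bp (π ++ [true]) false c₁
            (u false true) (u true true) (d false true) (d true true) hc₁ h4)) :=
          .leaf (by show some (out K _).conf = _; rw [conf_bp]; rfl)
        refine main2 (.leaf (d false false)) (.leaf (d false true)) K10 K11 hK00 hK01 hk10 hk11
          (by simp only [sz] at hsz ⊢; omega) ?_ ?_
        · show wt e₀ ≤ _
          rw [hw0]
          refine add_nonneg (S.sc_nonneg _ _ ht00 (S.wt_nonneg _))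
            (S.sc_nonneg _ _ ht01 (S.wt_nonneg _))
        · exact le_refl _
      · exact absurd hb0 (((S.wt_support e₀ hw0).2) _ _)
    · -- two / leaf
      subst hH0; subst hL1
      by_cases hw1 : wt e₁ = 0
      · have hK10 : SubComp (FT.leaf (d true false)) (realize K (.bp (π ++ [false]) true c₀
            (u false false) (u true false) (d false false) (d true false) hc₀ h3)) :=
          .leaf (by show some (out K _).conf = _; rw [conf_bp]; rfl)
        have hK11 : SubComp (FT.leaf (d true true)) (realize K (.bp (π ++ [true]) true c₁
            (u false true) (u true true) (d false true) (d true true) hc₁ h4)) :=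
          .leaf (by show some (out K _).conf = _; rw [conf_bp]; rfl)
        refine main2 K00 K01 (.leaf (d true false)) (.leaf (d true true)) hk00 hk01 hK10 hK11
          (by simp only [sz] at hsz ⊢; omega) ?_ ?_
        · exact le_refl _
        · show wt e₁ ≤ _
          rw [hw1]
          refine add_nonneg (S.sc_nonneg _ _ ht10 (S.wt_nonneg _))
            (S.sc_nonneg _ _ ht11 (S.wt_nonneg _))
      · exact absurd hb1 (((S.wt_support e₁ hw1).2) _ _)
    · -- two / two
      subst hH0; subst hH1
      exact main2 K00 K01 K10 K11 hk00 hk01 hk10 hk11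
        (by simp only [sz] at hsz ⊢; omega) (le_refl _) (le_refl _)
  · -- deterministic case
    have hout0 : out K (.bp π false a q₀ q₁ e₀ e₁ ha hbr) =
        Shp.one e₀ (.bp (π ++ [false]) false a₁ q₀ q₁ d' e' ha₁ hbr') := by
      show (bpCore K π a q₀ q₁ e₀ e₁ ha hbr).1 = _
      rw [hE]
    have hout1 : out K (.bp π true a q₀ q₁ e₀ e₁ ha hbr) =
        Shp.one e₁ (.bp (π ++ [false]) true a₁ q₀ q₁ d' e' ha₁ hbr') := by
      show (bpCore K π a q₀ q₁ e₀ e₁ ha hbr).2 = _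
      rw [hE]
    have main2 : ∀ K₀ K₁ : FT σ,
        SubComp K₀ (realize K (.bp (π ++ [false]) false a₁ q₀ q₁ d' e' ha₁ hbr')) →
        SubComp K₁ (realize K (.bp (π ++ [false]) true a₁ q₀ q₁ d' e' ha₁ hbr')) →
        sz K₀ + sz K₁ < n →
        val sc wt H₀ ≤ val sc wt K₀ → val sc wt H₁ ≤ val sc wt K₁ →
        ∃ G, SubComp G (sub K.T' π) ∧
          sc q₀ (val sc wt H₀) + sc q₁ (val sc wt H₁) ≤ val sc wt G := by
      intro K₀ K₁ hs0 hs1 hlt hv0 hv1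
      obtain ⟨G', hG', hvG⟩ := IHn _ hlt (π ++ [false]) a₁ q₀ q₁ d' e' ha₁ hbr' K₀ K₁
        le_rfl hs0 hs1
      refine ⟨.one a G', subcomp_sub_one ha h1 (by rw [ha₁]; rfl) h2 hG', ?_⟩
      show _ ≤ val sc wt G'
      calc sc q₀ (val sc wt H₀) + sc q₁ (val sc wt H₁)
          ≤ sc q₀ (val sc wt K₀) + sc q₁ (val sc wt K₁) :=
            add_le_add (S.sc_mono _ _ _ hq0 hv0) (S.sc_mono _ _ _ hq1 hv1)
        _ ≤ val sc wt G' := hvG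
    rcases subcomp_inv_one hout0 hsub₀ with hL0 | ⟨H₀', hH0, hs0⟩ <;>
      rcases subcomp_inv_one hout1 hsub₁ with hL1 | ⟨H₁', hH1, hs1⟩
    · subst hL0; subst hL1
      by_cases hw0 : wt e₀ = 0
      · by_cases hw1 : wt e₁ = 0
        · refine ⟨.leaf a, subcomp_sub_leaf ha, ?_⟩
          show sc q₀ (wt e₀) + sc q₁ (wt e₁) ≤ wt a
          rw [hw0, hw1, S.sc_zero, S.sc_zero, add_zero]
          exact S.wt_nonneg a
        · exact absurd h1' ((S.wt_support e₁ hw1).1 _)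
      · exact absurd h0' ((S.wt_support e₀ hw0).1 _)
    · subst hL0; subst hH1
      by_cases hw0 : wt e₀ = 0
      · have hK0 : SubComp (FT.leaf d') (realize K (.bp (π ++ [false]) false a₁ q₀ q₁ d' e'
            ha₁ hbr')) := .leaf (by show some (out K _).conf = _; rw [conf_bp]; rfl)
        refine main2 (.leaf d') H₁' hK0 hs1 (by simp only [sz] at hsz ⊢; omega) ?_ (le_refl _)
        show wt e₀ ≤ wt d'
        rw [hw0]; exact S.wt_nonneg _
      · exact absurd h0' ((S.wt_support e₀ hw0).1 _)
    · subst hH0; subst hL1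
      by_cases hw1 : wt e₁ = 0
      · have hK1 : SubComp (FT.leaf e') (realize K (.bp (π ++ [false]) true a₁ q₀ q₁ d' e'
            ha₁ hbr')) := .leaf (by show some (out K _).conf = _; rw [conf_bp]; rfl)
        refine main2 H₀' (.leaf e') hs0 hK1 (by simp only [sz] at hsz ⊢; omega) (le_refl _) ?_
        show wt e₁ ≤ wt e'
        rw [hw1]; exact S.wt_nonneg _
      · exact absurd h1' ((S.wt_support e₁ hw1).1 _)
    · subst hH0; subst hH1
      exact main2 H₀' H₁' hs0 hs1 (by simp only [sz] at hsz ⊢; omega) (le_refl _) (le_refl _)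

end SC

namespace SC
variable {σ : Type}
variable {ndet kdet : σ → σ → Prop} {branch : σ → ℝ × σ → ℝ × σ → Prop}
variable {M : Type} [AddCommMonoid M] [PartialOrder M] [IsOrderedAddMonoid M] {sc : ℝ → M → M} {wt : σ → M}

/-- replace the target tree of a context by a realized stripped tree -/
noncomputable def Ctx.strip (K₂ : Ctx ndet kdet branch) (x : St K₂) : Ctx ndet kdet branch :=
  { K₂ with
    T' := realize K₂ x
    hv' := realize_valid K₂ x
    hm' := realize_maximal K₂ x }

theorem main (S : SCK ndet kdet branch sc wt) :
    ∀ (F : FT σ) (T : PT σ), SubComp F T → T.Valid (Det ndet kdet) branch →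
      ∀ K₂ : Ctx ndet kdet branch, T.label [] = K₂.T'.label [] →
      ∃ G, SubComp G K₂.T' ∧ val sc wt F ≤ val sc wt G := by
  intro F T hsub
  induction hsub with
  | leaf h1 =>
    rename_i c T
    intro hv K₂ hroot
    exact ⟨.leaf c, .leaf (hroot.symm.trans h1), le_refl _⟩
  | one h1 h2 h3 h4 h5 IH =>
    rename_i c T F₁
    intro hv K₂ hroot
    obtain ⟨-, hdet⟩ := hv.det_step [] c ((T.label [false]).get h3) h1
      (Option.some_get h3).symm h4
    have hroot' : K₂.T'.label [] = some c := hroot.symm.trans h1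
    have hchild : (T.child false).label [] = some ((T.label [false]).get h3) :=
      (Option.some_get h3).symm
    have hroot₃ : (T.child false).label [] =
        (realize K₂ (.pend [] c ((T.label [false]).get h3) hroot' hdet)).label [] := by
      show _ = some (out K₂ (.pend [] c ((T.label [false]).get h3) hroot' hdet)).conf
      rw [show (out K₂ (.pend [] c ((T.label [false]).get h3) hroot' hdet)).conf =
        (outPend K₂ ⟨[], c, ((T.label [false]).get h3), hroot', hdet⟩).conf from rfl, conf_pend]
      exact hchild
    obtain ⟨H, hH, hvH⟩ := IH (valid_child hv false h3)
      (K₂.strip (.pend [] c ((T.label [false]).get h3) hroot' hdet)) hroot₃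
    obtain ⟨G, hG, hvG⟩ := dom_pend K₂ S (sz H)
      ⟨[], c, ((T.label [false]).get h3), hroot', hdet⟩ H le_rfl hH
    exact ⟨G, hG, le_trans hvH hvG⟩
  | two h1 h2 h3 h4 IH₀ IH₁ =>
    rename_i p q c T F₀ F₁
    intro hv K₂ hroot
    obtain ⟨p', q', d₀, d₁, hpq', hd₀, hd₁, hbr⟩ := hv.branch_step [] c h1 (by rw [h2]; rfl)
    rw [h2] at hpq'
    simp only [Option.some.injEq, Prod.mk.injEq] at hpq'
    obtain ⟨hp, hq⟩ := hpq'
    subst hp; subst hq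
    simp only [List.nil_append] at hd₀ hd₁
    obtain ⟨hp0, hq0, -⟩ := K₂.hsum _ _ _ _ _ hbr
    have hroot' : K₂.T'.label [] = some c := hroot.symm.trans h1
    have hroot₀ : (T.child false).label [] =
        (realize K₂ (.bp [] false c p q d₀ d₁ hroot' hbr)).label [] := by
      show T.label [false] = some (out K₂ (.bp [] false c p q d₀ d₁ hroot' hbr)).conf
      rw [conf_bp, hd₀]
      rfl
    have hroot₁ : (T.child true).label [] =
        (realize K₂ (.bp [] true c p q d₀ d₁ hroot' hbr)).label [] := by
      show T.label [true] = some (out K₂ (.bp [] true c p q d₀ d₁ hroot' hbr)).conf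
      rw [conf_bp, hd₁]
      rfl
    obtain ⟨H₀, hH₀, hv₀⟩ := IH₀ (valid_child hv false
        (by rw [show (T.child false).label [] = T.label [false] from rfl, hd₀]; rfl))
      (K₂.strip (.bp [] false c p q d₀ d₁ hroot' hbr)) hroot₀
    obtain ⟨H₁, hH₁, hv₁⟩ := IH₁ (valid_child hv true
        (by rw [show (T.child true).label [] = T.label [true] from rfl, hd₁]; rfl))
      (K₂.strip (.bp [] true c p q d₀ d₁ hroot' hbr)) hroot₁
    obtain ⟨G, hG, hvG⟩ := dom_bp K₂ S (sz H₀ + sz H₁) [] c p q d₀ d₁ hroot' hbr H₀ H₁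
      le_rfl hH₀ hH₁
    refine ⟨G, hG, ?_⟩
    calc val sc wt (FT.two p q c F₀ F₁) = sc p (val sc wt F₀) + sc q (val sc wt F₁) := rfl
      _ ≤ sc p (val sc wt H₀) + sc q (val sc wt H₁) :=
          add_le_add (S.sc_mono _ _ _ hp0 hv₀) (S.sc_mono _ _ _ hq0 hv₁)
      _ ≤ val sc wt G := hvG

end SC

namespace SC
variable {σ : Type}
variable {ndet kdet : σ → σ → Prop} {branch : σ → ℝ × σ → ℝ × σ → Prop}
variable {M : Type} [AddCommMonoid M] [PartialOrder M] [IsOrderedAddMonoid M] {sc : ℝ → M → M} {wt : σ → M}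

theorem sck_mul {wt : σ → ℝ} (hwt0 : ∀ c, 0 ≤ wt c)
    (hwts : ∀ c, wt c ≠ 0 → IsNF (Det ndet kdet) branch c) :
    SCK ndet kdet branch (fun a x => a * x) wt :=
  ⟨fun a x y => mul_add a x y, fun a b x => (mul_assoc a b x).symm,
   fun a b x h => by rw [h], fun a x y ha h => mul_le_mul_of_nonneg_left h ha,
   fun a x ha hx => mul_nonneg ha hx, fun a => mul_zero a, hwt0, hwts⟩

theorem sck_enat {wt : σ → ℕ∞}
    (hwts : ∀ c, wt c ≠ 0 → IsNF (Det ndet kdet) branch c) :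
    SCK ndet kdet branch (fun (_ : ℝ) (x : ℕ∞) => x) wt :=
  ⟨fun _ _ _ => rfl, fun _ _ _ => rfl, fun _ _ _ _ => rfl, fun _ _ _ _ h => h,
   fun _ _ _ hx => hx, fun _ => rfl, fun _ => zero_le, hwts⟩

theorem val_pr (C : σ) : ∀ F : FT σ,
    FT.Pr C F = val (fun a x => a * x) (fun d => if d = C then (1 : ℝ) else 0) F := by
  intro F
  induction F with
  | leaf c => rfl
  | one c F IH => simp only [FT.Pr, val, IH]
  | two p q c F G IH1 IH2 => simp only [FT.Pr, val, IH1, IH2]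

theorem val_prany (NF : σ → Prop) : ∀ F : FT σ,
    FT.PrAny NF F = val (fun a x => a * x) (fun d => if NF d then (1 : ℝ) else 0) F := by
  intro F
  induction F with
  | leaf c => rfl
  | one c F IH => simp only [FT.PrAny, val, IH]
  | two p q c F G IH1 IH2 => simp only [FT.PrAny, val, IH1, IH2]

theorem val_nc (C : σ) : ∀ F : FT σ,
    FT.Nc C F = val (fun (_ : ℝ) (x : ℕ∞) => x) (fun d => if d = C then (1 : ℕ∞) else 0) F := by
  intro F
  induction F with
  | leaf c => rfl
  | one c F IH => simp only [FT.Nc, val, IH]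
  | two p q c F G IH1 IH2 => simp only [FT.Nc, val, IH1, IH2]

theorem val_nany (NF : σ → Prop) : ∀ F : FT σ,
    FT.NAny NF F = val (fun (_ : ℝ) (x : ℕ∞) => x) (fun d => if NF d then (1 : ℕ∞) else 0) F := by
  intro F
  induction F with
  | leaf c => rfl
  | one c F IH => simp only [FT.NAny, val, IH]
  | two p q c F G IH1 IH2 => simp only [FT.NAny, val, IH1, IH2]

theorem val_le_one (K : Ctx ndet kdet branch) {wt : σ → ℝ} (hwt : ∀ c, wt c ≤ 1) :
    ∀ {F : FT σ} {X : PT σ}, SubComp F X → X.Valid (Det ndet kdet) branch →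
      val (fun a x => a * x) wt F ≤ 1 := by
  intro F X h
  induction h with
  | leaf h1 => intro _; exact hwt _
  | one h1 h2 h3 h4 h5 IH =>
    intro hvX
    exact IH (valid_child hvX false h3)
  | two h1 h2 h3 h4 IH1 IH2 =>
    rename_i p q c T F G
    intro hvX
    obtain ⟨p', q', d, e, hpq, hd, he, hbr⟩ := hvX.branch_step [] c h1 (by rw [h2]; rfl)
    rw [h2] at hpq
    simp only [Option.some.injEq, Prod.mk.injEq] at hpq
    obtain ⟨hp, hq⟩ := hpq
    subst hp; subst hq
    obtain ⟨hp0, hq0, hpq1⟩ := K.hsum _ _ _ _ _ hbr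
    simp only [List.nil_append] at hd he
    have h0 : val (fun a x => a * x) wt F ≤ 1 := IH1 (valid_child hvX false
      (by rw [show (T.child false).label [] = T.label [false] from rfl, hd]; rfl))
    have h1' : val (fun a x => a * x) wt G ≤ 1 := IH2 (valid_child hvX true
      (by rw [show (T.child true).label [] = T.label [true] from rfl, he]; rfl))
    calc val (fun a x => a * x) wt (FT.two p q c F G)
        = p * val (fun a x => a * x) wt F + q * val (fun a x => a * x) wt G := rfl
      _ ≤ p * 1 + q * 1 := add_le_add (mul_le_mul_of_nonneg_left h0 hp0)
          (mul_le_mul_of_nonneg_left h1' hq0)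
      _ = 1 := by rw [mul_one, mul_one, hpq1]

theorem transfer (K K' : Ctx ndet kdet branch) (hroot : K'.T'.label [] = K.T'.label [])
    (S : SCK ndet kdet branch sc wt) (f : FT σ → M) (hf : ∀ F, f F = val sc wt F) :
    ∀ x ∈ {x | ∃ F, SubComp F K'.T' ∧ f F = x},
      ∃ y ∈ {x | ∃ F, SubComp F K.T' ∧ f F = x}, x ≤ y := by
  rintro x ⟨F, hF, rfl⟩
  obtain ⟨G, hG, hle⟩ := main S F K'.T' hF K'.hv' K hroot
  exact ⟨f G, ⟨G, hG, rfl⟩, by rw [hf, hf]; exact hle⟩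

theorem set_nonempty (X : PT σ) (hvX : (X.label []).isSome) (f : FT σ → M) :
    {x | ∃ F, SubComp F X ∧ f F = x}.Nonempty :=
  ⟨f (.leaf ((X.label []).get hvX)),
   ⟨.leaf ((X.label []).get hvX), .leaf (Option.some_get hvX).symm, rfl⟩⟩

theorem sup_eq_enat {A B : Set ℕ∞} (h1 : ∀ x ∈ A, ∃ y ∈ B, x ≤ y)
    (h2 : ∀ y ∈ B, ∃ x ∈ A, y ≤ x) : sSup A = sSup B := by
  apply le_antisymm
  · refine sSup_le fun x hx => ?_
    obtain ⟨y, hy, hxy⟩ := h1 x hx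
    exact le_sSup_of_le hy hxy
  · refine sSup_le fun y hy => ?_
    obtain ⟨x, hx, hyx⟩ := h2 y hy
    exact le_sSup_of_le hx hyx

theorem sup_eq_real {A B : Set ℝ} (hA : A.Nonempty) (hB : B.Nonempty)
    (hAb : BddAbove A) (hBb : BddAbove B) (h1 : ∀ x ∈ A, ∃ y ∈ B, x ≤ y)
    (h2 : ∀ y ∈ B, ∃ x ∈ A, y ≤ x) : sSup A = sSup B := by
  apply le_antisymm
  · refine csSup_le hA fun x hx => ?_
    obtain ⟨y, hy, hxy⟩ := h1 x hx
    exact le_trans hxy (le_csSup hBb hy)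
  · refine csSup_le hB fun y hy => ?_
    obtain ⟨x, hx, hyx⟩ := h2 y hy
    exact le_trans hyx (le_csSup hAb hx)

end SC



/-- Strong confluence for possibly infinite maximal probabilistic computations over
an abstract rewriting system whose deterministic steps split into proper steps
`ndet` (the class `𝒩`) and commutative steps `kdet` (the class `𝒦`), satisfying
quasi-one-step confluence and strong normalization of the commutative sub-relation:
any two maximal computations with the same root have the same quantitative
behaviour. -/
theorem strong_confluence
    (ndet kdet : σ → σ → Prop) (branch : σ → ℝ × σ → ℝ × σ → Prop)
    (hsum : ∀ a p b q c, branch a (p, b) (q, c) → 0 ≤ p ∧ 0 ≤ q ∧ p + q = 1)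
    (hkk : ∀ a b c, kdet a b → kdet a c → b = c ∨ ∃ d, kdet b d ∧ kdet c d)
    (hkn : ∀ a b c, kdet a b → ndet a c → ndet b c ∨ ∃ d, ndet b d ∧ kdet c d)
    (hkm : ∀ a b p c q d, kdet a b → branch a (p, c) (q, d) →
      ∃ c' d', branch b (p, c') (q, d') ∧ kdet c c' ∧ kdet d d')
    (hnn : ∀ a b c, ndet a b → ndet a c → b = c ∨ ∃ d, ndet b d ∧ ndet c d)
    (hnm : ∀ a b p c q d, ndet a b → branch a (p, c) (q, d) →
      ∃ c' d', branch b (p, c') (q, d') ∧ (ndet c c' ∨ kdet c c') ∧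
        (ndet d d' ∨ kdet d d'))
    (hmm : ∀ a p₀ b₀ p₁ b₁ s₀ c₀ s₁ c₁,
      branch a (p₀, b₀) (p₁, b₁) → branch a (s₀, c₀) (s₁, c₁) →
      ((p₀, b₀) = (s₀, c₀) ∧ (p₁, b₁) = (s₁, c₁)) ∨
      ∃ (d : Bool → Bool → σ) (t u : Bool → Bool → ℝ),
        branch b₀ (t false false, d false false) (t false true, d false true) ∧
        branch b₁ (t true false, d true false) (t true true, d true true) ∧
        branch c₀ (u false false, d false false) (u true false, d true false) ∧
        branch c₁ (u false true, d false true) (u true true, d true true) ∧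
        ∀ i j, (bif i then p₁ else p₀) * t i j = (bif j then s₁ else s₀) * u i j)
    (hsn : ¬ ∃ f : ℕ → σ, ∀ n : ℕ, kdet (f n) (f (n + 1)))
    (T T' : PT σ)
    (hv : T.Valid (fun a b => ndet a b ∨ kdet a b) branch)
    (hv' : T'.Valid (fun a b => ndet a b ∨ kdet a b) branch)
    (hm : T.Maximal (IsNF (fun a b => ndet a b ∨ kdet a b) branch))
    (hm' : T'.Maximal (IsNF (fun a b => ndet a b ∨ kdet a b) branch))
    (hroot : T.label [] = T'.label []) :
    (∀ C, IsNF (fun a b => ndet a b ∨ kdet a b) branch C →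
      T.Pr C = T'.Pr C ∧ T.Nc C = T'.Nc C) ∧
    T.PrAny (IsNF (fun a b => ndet a b ∨ kdet a b) branch)
      = T'.PrAny (IsNF (fun a b => ndet a b ∨ kdet a b) branch) ∧
    T.NAny (IsNF (fun a b => ndet a b ∨ kdet a b) branch)
      = T'.NAny (IsNF (fun a b => ndet a b ∨ kdet a b) branch) := by
  let K : SC.Ctx ndet kdet branch := ⟨hsum, hkk, hkn, hkm, hnn, hnm, hmm, hsn, T', hv', hm'⟩
  let K' : SC.Ctx ndet kdet branch := ⟨hsum, hkk, hkn, hkm, hnn, hnm, hmm, hsn, T, hv, hm⟩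
  have hroot1 : K'.T'.label [] = K.T'.label [] := hroot
  have hroot2 : K.T'.label [] = K'.T'.label [] := hroot.symm
  refine ⟨fun C hC => ⟨?_, ?_⟩, ?_, ?_⟩
  · -- Pr C
    have S : SC.SCK ndet kdet branch (fun a x => a * x)
        (fun d => if d = C then (1 : ℝ) else 0) :=
      SC.sck_mul (fun c => by split <;> norm_num)
        (fun c hc => by
          split at hc
          · next h => exact h ▸ hC
          · exact absurd rfl hc)
    show sSup _ = sSup _
    refine SC.sup_eq_real (SC.set_nonempty T hv.root_isSome _)
      (SC.set_nonempty T' hv'.root_isSome _) ⟨1, ?_⟩ ⟨1, ?_⟩ ?_ ?_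
    · rintro x ⟨F, hF, rfl⟩
      rw [SC.val_pr]
      exact SC.val_le_one K (fun c => by split <;> norm_num) hF hv
    · rintro x ⟨F, hF, rfl⟩
      rw [SC.val_pr]
      exact SC.val_le_one K (fun c => by split <;> norm_num) hF hv'
    · exact SC.transfer K K' hroot1 S (FT.Pr C) (SC.val_pr C)
    · exact SC.transfer K' K hroot2 S (FT.Pr C) (SC.val_pr C)
  · -- Nc C
    have S : SC.SCK ndet kdet branch (fun (_ : ℝ) (x : ℕ∞) => x)
        (fun d => if d = C then (1 : ℕ∞) else 0) :=
      SC.sck_enat (fun c hc => by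
          split at hc
          · next h => exact h ▸ hC
          · exact absurd rfl hc)
    show sSup _ = sSup _
    refine SC.sup_eq_enat ?_ ?_
    · exact SC.transfer K K' hroot1 S (FT.Nc C) (SC.val_nc C)
    · exact SC.transfer K' K hroot2 S (FT.Nc C) (SC.val_nc C)
  · -- PrAny
    have S : SC.SCK ndet kdet branch (fun a x => a * x)
        (fun d => if IsNF (fun a b => ndet a b ∨ kdet a b) branch d then (1 : ℝ) else 0) :=
      SC.sck_mul (fun c => by split <;> norm_num)
        (fun c hc => by
          split at hc
          · next h => exact h
          · exact absurd rfl hc)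
    show sSup _ = sSup _
    refine SC.sup_eq_real (SC.set_nonempty T hv.root_isSome _)
      (SC.set_nonempty T' hv'.root_isSome _) ⟨1, ?_⟩ ⟨1, ?_⟩ ?_ ?_
    · rintro x ⟨F, hF, rfl⟩
      rw [SC.val_prany]
      exact SC.val_le_one K (fun c => by split <;> norm_num) hF hv
    · rintro x ⟨F, hF, rfl⟩
      rw [SC.val_prany]
      exact SC.val_le_one K (fun c => by split <;> norm_num) hF hv'
    · exact SC.transfer K K' hroot1 S (FT.PrAny _) (SC.val_prany _)
    · exact SC.transfer K' K hroot2 S (FT.PrAny _) (SC.val_prany _)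
  · -- NAny
    have S : SC.SCK ndet kdet branch (fun (_ : ℝ) (x : ℕ∞) => x)
        (fun d => if IsNF (fun a b => ndet a b ∨ kdet a b) branch d then (1 : ℕ∞) else 0) :=
      SC.sck_enat (fun c hc => by
          split at hc
          · next h => exact h
          · exact absurd rfl hc)
    show sSup _ = sSup _
    refine SC.sup_eq_enat ?_ ?_
    · exact SC.transfer K K' hroot1 S (FT.NAny _) (SC.val_nany _)
    · exact SC.transfer K' K hroot2 S (FT.NAny _) (SC.val_nany _)
end

section
/- Simulation of finite by maximal computations: for every maximal probabilistic computation P and every finite probabilistic computation R with the same root, there exists a finite sub-computation Q ⊑ P such that for every normal form C, P(Q,C) ≥ P(R,C) and N(Q,C) ≥ N(R,C), and moreover P_any(Q) ≥ P_any(R) and N_any(Q) ≥ N_any(R). -/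
attribute [local instance] Classical.propDecidable

variable {σ : Type}

/-- A strictly monotone binary operation on ordinals, replacing the natural sum. -/
noncomputable def PSim.nadd (a b : Ordinal) : Ordinal := (a + 1) * (b + 1)

infixl:65 " ♯ " => PSim.nadd

theorem Ordinal.nadd_lt_nadd_left {b c : Ordinal} (h : b < c) (a : Ordinal) : a ♯ b < a ♯ c := by
  unfold PSim.nadd
  exact mul_lt_mul_of_pos_left (lt_of_le_of_lt (Order.add_one_le_of_lt h) (Order.lt_add_one_iff.2 le_rfl)) (lt_of_le_of_lt zero_le (Order.lt_add_one_iff.2 le_rfl))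

theorem Ordinal.nadd_lt_nadd_right {b c : Ordinal} (h : b < c) (a : Ordinal) : b ♯ a < c ♯ a := by
  unfold PSim.nadd
  rw [mul_add_one, mul_add_one]
  calc (b + 1) * a + (b + 1) < (b + 1) * a + (c + 1) := add_lt_add_right (lt_of_le_of_lt (Order.add_one_le_of_lt h) (Order.lt_add_one_iff.2 le_rfl)) _
    _ ≤ (c + 1) * a + (c + 1) := add_le_add_left (mul_le_mul_left (add_le_add_left h.le 1) a) _

namespace PSim

section Helpers

/-- A relation with no infinite forward chains is conversely well-founded. -/
theorem wf_of_no_chain {α : Type*} {r : α → α → Prop}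
    (h : ¬ ∃ f : ℕ → α, ∀ n : ℕ, r (f n) (f (n + 1))) :
    WellFounded (fun a b => r b a) := by
  constructor
  intro a
  by_contra hna
  have key : ∀ x : α, ¬ Acc (fun a b => r b a) x → ∃ y, r x y ∧ ¬ Acc (fun a b => r b a) y := by
    intro x hx
    by_contra hc
    push_neg at hc
    exact hx (Acc.intro x fun y hy => hc y hy)
  let F : {x : α // ¬ Acc (fun a b => r b a) x} → {x : α // ¬ Acc (fun a b => r b a) x} :=
    fun p => ⟨(key p.1 p.2).choose, (key p.1 p.2).choose_spec.2⟩
  refine h ⟨fun n => (F^[n] ⟨a, hna⟩).1, fun n => ?_⟩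
  show r (F^[n] ⟨a, hna⟩).1 (F^[n+1] ⟨a, hna⟩).1
  rw [Function.iterate_succ_apply' F n]
  exact (key (F^[n] ⟨a, hna⟩).1 (F^[n] ⟨a, hna⟩).2).choose_spec.1

theorem drop_lt {Λ e' e r' r : Ordinal} (hr' : r' < Λ) (h : e' < e) :
    Λ * e' + r' < Λ * e + r := by
  have h1 : Λ * e' + r' < Λ * e' + Λ := add_lt_add_right hr' _
  have h2 : Λ * e' + Λ = Λ * (e' + 1) := by rw [mul_add, mul_one]
  have h3 : Λ * (e' + 1) ≤ Λ * e := mul_le_mul_right (Order.add_one_le_of_lt h) Λ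
  calc Λ * e' + r' < Λ * (e' + 1) := h2 ▸ h1
    _ ≤ Λ * e := h3
    _ ≤ Λ * e + r := le_self_add

theorem pad_lt {Λ e r : Ordinal} (hΛ : 0 < Λ) (hr : 0 < r) : e < Λ * e + r :=
  lt_of_le_of_lt (Ordinal.le_mul_right e hΛ) (lt_add_of_pos_right _ hr)

theorem forall2_append {R : Ordinal → Ordinal → Prop} {l₁ l₂ l₃ l₄ : List Ordinal}
    (h : List.Forall₂ R l₁ l₂) (h' : List.Forall₂ R l₃ l₄) :
    List.Forall₂ R (l₁ ++ l₃) (l₂ ++ l₄) := by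
  induction h with
  | nil => exact h'
  | cons hab _ ih => exact List.Forall₂.cons hab ih

theorem forall2_map_map {l' l : List Ordinal} {f' f : Ordinal → Ordinal}
    (h : List.Forall₂ (· < ·) l' l) (hf : ∀ a b, a < b → f' a < f b) :
    List.Forall₂ (· < ·) (l'.map f') (l.map f) := by
  induction h with
  | nil => exact List.Forall₂.nil
  | cons hab _ ih => exact List.Forall₂.cons (hf _ _ hab) ih

theorem forall2_map_both {l : List Ordinal} {f' f : Ordinal → Ordinal}
    (hf : ∀ a, f' a < f a) : List.Forall₂ (· < ·) (l.map f') (l.map f) := by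
  induction l with
  | nil => exact List.Forall₂.nil
  | cons a l ih => exact List.Forall₂.cons (hf a) ih

theorem forall2_map_right {l : List Ordinal} {f : Ordinal → Ordinal}
    (hf : ∀ a, a < f a) : List.Forall₂ (· < ·) l (l.map f) := by
  induction l with
  | nil => exact List.Forall₂.nil
  | cons a l ih => exact List.Forall₂.cons (hf a) ih

theorem forall2_lt_map_of_forall2 {l'' l : List Ordinal} {f : Ordinal → Ordinal}
    (h : List.Forall₂ (· < ·) l'' l) (hf : ∀ a, a < f a) :
    List.Forall₂ (· < ·) l'' (l.map f) := by
  induction h with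
  | nil => exact List.Forall₂.nil
  | cons hab _ ih => exact List.Forall₂.cons (lt_trans hab (hf _)) ih

theorem foldr_nadd_lt : ∀ {l' l : List Ordinal}, List.Forall₂ (· < ·) l' l → l ≠ [] →
    l'.foldr (· ♯ ·) 0 < l.foldr (· ♯ ·) 0 := by
  intro l' l h
  induction h with
  | nil => intro hne; exact absurd rfl hne
  | @cons a b l₁ l₂ hab htl ih =>
    intro _
    rcases htl with _ | @⟨a', b', l₁', l₂', hab', htl'⟩
    · exact Ordinal.nadd_lt_nadd_right hab _
    · have h1 : (a' :: l₁').foldr (· ♯ ·) 0 < (b' :: l₂').foldr (· ♯ ·) 0 :=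
        ih (by simp)
      calc (a :: a' :: l₁').foldr (· ♯ ·) 0 = a ♯ (a' :: l₁').foldr (· ♯ ·) 0 := rfl
        _ < b ♯ (a' :: l₁').foldr (· ♯ ·) 0 := Ordinal.nadd_lt_nadd_right hab _
        _ < b ♯ (b' :: l₂').foldr (· ♯ ·) 0 := Ordinal.nadd_lt_nadd_left h1 _

end Helpers
end PSim

namespace PSim

/-- A bundled rewriting context with all confluence hypotheses and a rank function
for the commutative sub-relation. -/
structure Ctx (σ : Type) where
  ndet : σ → σ → Prop
  kdet : σ → σ → Prop
  branch : σ → ℝ × σ → ℝ × σ → Prop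
  rk : σ → Ordinal.{0}
  Λ : Ordinal.{0}
  hrk : ∀ a b, kdet a b → rk b < rk a
  hΛ : ∀ a, rk a < Λ
  hsum : ∀ a p b q c, branch a (p, b) (q, c) → 0 ≤ p ∧ 0 ≤ q ∧ p + q = 1
  hkk : ∀ a b c, kdet a b → kdet a c → b = c ∨ ∃ d, kdet b d ∧ kdet c d
  hkn : ∀ a b c, kdet a b → ndet a c → ndet b c ∨ ∃ d, ndet b d ∧ kdet c d
  hkm : ∀ a b p c q d, kdet a b → branch a (p, c) (q, d) →
      ∃ c' d', branch b (p, c') (q, d') ∧ kdet c c' ∧ kdet d d'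
  hnn : ∀ a b c, ndet a b → ndet a c → b = c ∨ ∃ d, ndet b d ∧ ndet c d
  hnm : ∀ a b p c q d, ndet a b → branch a (p, c) (q, d) →
      ∃ c' d', branch b (p, c') (q, d') ∧ (ndet c c' ∨ kdet c c') ∧
        (ndet d d' ∨ kdet d d')
  hmm : ∀ a p₀ b₀ p₁ b₁ s₀ c₀ s₁ c₁,
      branch a (p₀, b₀) (p₁, b₁) → branch a (s₀, c₀) (s₁, c₁) →
      ((p₀, b₀) = (s₀, c₀) ∧ (p₁, b₁) = (s₁, c₁)) ∨
      ∃ (d : Bool → Bool → σ) (t u : Bool → Bool → ℝ),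
        branch b₀ (t false false, d false false) (t false true, d false true) ∧
        branch b₁ (t true false, d true false) (t true true, d true true) ∧
        branch c₀ (u false false, d false false) (u true false, d true false) ∧
        branch c₁ (u false true, d false true) (u true true, d true true) ∧
        ∀ i j, (bif i then p₁ else p₀) * t i j = (bif j then s₁ else s₀) * u i j

variable {σ : Type}

def Ctx.det (Γ : Ctx σ) : σ → σ → Prop := fun a b => Γ.ndet a b ∨ Γ.kdet a b

def Ctx.NF (Γ : Ctx σ) : σ → Prop := IsNF Γ.det Γ.branch

theorem Ctx.not_nf_of_det (Γ : Ctx σ) {a b : σ} (h : Γ.det a b) : ¬ Γ.NF a :=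
  fun hn => hn.1 b h

theorem Ctx.not_nf_of_branch (Γ : Ctx σ) {a : σ} {x y : ℝ × σ} (h : Γ.branch a x y) :
    ¬ Γ.NF a := fun hn => hn.2 x y h

theorem Ctx.rk_pos (Γ : Ctx σ) {a b : σ} (h : Γ.kdet a b) : 0 < Γ.rk a :=
  lt_of_le_of_lt zero_le (Γ.hrk a b h)

theorem Ctx.Λ_pos (Γ : Ctx σ) (a : σ) : 0 < Γ.Λ :=
  lt_of_le_of_lt zero_le (Γ.hΛ a)

/-- number of leaves -/
def nl : FT σ → ℕ
  | .leaf _ => 1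
  | .one _ T => nl T
  | .two _ _ _ T₁ T₂ => nl T₁ + nl T₂

theorem nl_pos : ∀ R : FT σ, 0 < nl R
  | .leaf _ => Nat.one_pos
  | .one _ T => nl_pos T
  | .two _ _ _ T₁ T₂ => Nat.add_pos_left (nl_pos T₁) _

/-- does the tree contain a normal-form leaf? -/
def Ctx.hasNF (Γ : Ctx σ) : FT σ → Prop
  | .leaf c => Γ.NF c
  | .one _ T => Γ.hasNF T
  | .two _ _ _ T₁ T₂ => Γ.hasNF T₁ ∨ Γ.hasNF T₂

/-- the weight of a tree -/
noncomputable def Ctx.W (Γ : Ctx σ) : FT σ → ℕ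
  | .leaf c => if Γ.NF c then 0 else 1
  | .one c T => (if Γ.kdet c T.root then 0 else nl T) + Γ.W T
  | .two _ _ _ T₁ T₂ => nl T₁ + nl T₂ + Γ.W T₁ + Γ.W T₂

/-- the list of positional path-measures of the normal-form leaves -/
noncomputable def Ctx.L (Γ : Ctx σ) : FT σ → List Ordinal.{0}
  | .leaf c => if Γ.NF c then [0] else []
  | .one c T => (Γ.L T).map (fun e => Γ.Λ * e + Γ.rk c)
  | .two _ _ c T₁ T₂ => ((Γ.L T₁) ++ (Γ.L T₂)).map (fun e => Γ.Λ * e + Γ.rk c)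

noncomputable def Ctx.E (Γ : Ctx σ) (R : FT σ) : Ordinal.{0} :=
  (Γ.L R).foldr (· ♯ ·) 0

theorem Ctx.L_nil_iff (Γ : Ctx σ) : ∀ R : FT σ, Γ.L R = [] ↔ ¬ Γ.hasNF R := by
  intro R
  induction R with
  | leaf c =>
    simp only [Ctx.L, Ctx.hasNF]
    split_ifs with h <;> simp [h]
  | one c T ih => simpa [Ctx.L, Ctx.hasNF] using ih
  | two p q c T₁ T₂ ih₁ ih₂ =>
    simp only [Ctx.L, Ctx.hasNF, List.map_eq_nil_iff, List.append_eq_nil_iff]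
    tauto

/-- domination of measures -/
def Ctx.Dom (Γ : Ctx σ) (R R' : FT σ) : Prop :=
  (∀ C, Γ.NF C → FT.Pr C R ≤ FT.Pr C R' ∧ FT.Nc C R ≤ FT.Nc C R') ∧
  FT.PrAny Γ.NF R ≤ FT.PrAny Γ.NF R' ∧ FT.NAny Γ.NF R ≤ FT.NAny Γ.NF R'

theorem Ctx.dom_refl (Γ : Ctx σ) (R : FT σ) : Γ.Dom R R :=
  ⟨fun _ _ => ⟨le_refl _, le_refl _⟩, le_refl _, le_refl _⟩

theorem Ctx.dom_trans (Γ : Ctx σ) {R₁ R₂ R₃ : FT σ} (h : Γ.Dom R₁ R₂) (h' : Γ.Dom R₂ R₃) :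
    Γ.Dom R₁ R₃ :=
  ⟨fun C hC => ⟨le_trans (h.1 C hC).1 (h'.1 C hC).1, le_trans (h.1 C hC).2 (h'.1 C hC).2⟩,
   le_trans h.2.1 h'.2.1, le_trans h.2.2 h'.2.2⟩

@[simp] theorem pr_one (C c : σ) (T : FT σ) : FT.Pr C (.one c T) = FT.Pr C T := rfl
@[simp] theorem nc_one (C c : σ) (T : FT σ) : FT.Nc C (.one c T) = FT.Nc C T := rfl
@[simp] theorem prany_one (NFp : σ → Prop) (c : σ) (T : FT σ) :
    FT.PrAny NFp (.one c T) = FT.PrAny NFp T := rfl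
@[simp] theorem nany_one (NFp : σ → Prop) (c : σ) (T : FT σ) :
    FT.NAny NFp (.one c T) = FT.NAny NFp T := rfl
@[simp] theorem pr_two (C : σ) (p q : ℝ) (c : σ) (T₁ T₂ : FT σ) :
    FT.Pr C (.two p q c T₁ T₂) = p * FT.Pr C T₁ + q * FT.Pr C T₂ := rfl
@[simp] theorem nc_two (C : σ) (p q : ℝ) (c : σ) (T₁ T₂ : FT σ) :
    FT.Nc C (.two p q c T₁ T₂) = FT.Nc C T₁ + FT.Nc C T₂ := rfl
@[simp] theorem prany_two (NFp : σ → Prop) (p q : ℝ) (c : σ) (T₁ T₂ : FT σ) :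
    FT.PrAny NFp (.two p q c T₁ T₂) = p * FT.PrAny NFp T₁ + q * FT.PrAny NFp T₂ := rfl
@[simp] theorem nany_two (NFp : σ → Prop) (p q : ℝ) (c : σ) (T₁ T₂ : FT σ) :
    FT.NAny NFp (.two p q c T₁ T₂) = FT.NAny NFp T₁ + FT.NAny NFp T₂ := rfl

theorem Ctx.dom_one (Γ : Ctx σ) (c : σ) (T X : FT σ) (h : Γ.Dom T X) :
    Γ.Dom (.one c T) X :=
  ⟨fun C hC => by rw [pr_one, nc_one]; exact h.1 C hC,
   by rw [prany_one]; exact h.2.1, by rw [nany_one]; exact h.2.2⟩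

end PSim

namespace PSim
variable {σ : Type}

theorem Ctx.leaf_zero (Γ : Ctx σ) {x : σ} (h : ¬ Γ.NF x) :
    (∀ C, Γ.NF C → FT.Pr C (.leaf x) = 0 ∧ FT.Nc C (.leaf x) = 0) ∧
    FT.PrAny Γ.NF (.leaf x) = 0 ∧ FT.NAny Γ.NF (.leaf x) = 0 := by
  refine ⟨fun C hC => ?_, ?_, ?_⟩
  · have : x ≠ C := fun he => h (he ▸ hC)
    simp [FT.Pr, FT.Nc, this]
  · simp [FT.PrAny, h]
  · simp [FT.NAny, h]

theorem Ctx.zero_measures (Γ : Ctx σ) : ∀ R : FT σ, ¬ Γ.hasNF R →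
    (∀ C, Γ.NF C → FT.Pr C R = 0 ∧ FT.Nc C R = 0) ∧
    FT.PrAny Γ.NF R = 0 ∧ FT.NAny Γ.NF R = 0 := by
  intro R
  induction R with
  | leaf c => intro h; exact Γ.leaf_zero h
  | one c T ih =>
    intro h
    simp only [Ctx.hasNF] at h
    refine ⟨fun C hC => ?_, ?_, ?_⟩
    · rw [pr_one, nc_one]; exact (ih h).1 C hC
    · rw [prany_one]; exact (ih h).2.1
    · rw [nany_one]; exact (ih h).2.2
  | two p q c T₁ T₂ ih₁ ih₂ =>
    intro h
    simp only [Ctx.hasNF] at h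
    push_neg at h
    refine ⟨fun C hC => ?_, ?_, ?_⟩
    · rw [pr_two, nc_two, ((ih₁ h.1).1 C hC).1, ((ih₂ h.2).1 C hC).1,
        ((ih₁ h.1).1 C hC).2, ((ih₂ h.2).1 C hC).2]
      simp
    · rw [prany_two, (ih₁ h.1).2.1, (ih₂ h.2).2.1]; simp
    · rw [nany_two, (ih₁ h.1).2.2, (ih₂ h.2).2.2]; simp

/-- pruning: replace a tree with no normal-form leaves by a single leaf -/
noncomputable def Ctx.prune (Γ : Ctx σ) (R : FT σ) : FT σ :=
  if Γ.hasNF R then R else .leaf R.root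

theorem Ctx.prune_root (Γ : Ctx σ) (R : FT σ) : (Γ.prune R).root = R.root := by
  unfold Ctx.prune; split_ifs <;> rfl

theorem Ctx.prune_valid (Γ : Ctx σ) {R : FT σ} (h : R.Valid Γ.det Γ.branch) :
    (Γ.prune R).Valid Γ.det Γ.branch := by
  unfold Ctx.prune; split_ifs
  · exact h
  · exact FT.Valid.leaf _

theorem Ctx.root_not_nf (Γ : Ctx σ) {R : FT σ} (h : R.Valid Γ.det Γ.branch)
    (hne : ∀ c, R ≠ .leaf c) : ¬ Γ.NF R.root := by
  cases h with
  | leaf c => exact absurd rfl (hne c)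
  | one hd _ => exact Γ.not_nf_of_det hd
  | two hb _ _ => exact Γ.not_nf_of_branch hb

theorem Ctx.P0_prune (Γ : Ctx σ) (R : FT σ) :
    (∃ c, Γ.prune R = .leaf c) ∨ Γ.hasNF (Γ.prune R) := by
  unfold Ctx.prune; split_ifs with h
  · exact Or.inr h
  · exact Or.inl ⟨_, rfl⟩

theorem Ctx.prune_dom (Γ : Ctx σ) {R : FT σ} (h : R.Valid Γ.det Γ.branch) :
    Γ.Dom R (Γ.prune R) ∧ Γ.Dom (Γ.prune R) R := by
  unfold Ctx.prune
  split_ifs with hn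
  · exact ⟨Γ.dom_refl R, Γ.dom_refl R⟩
  · by_cases hl : ∀ c, R ≠ .leaf c
    · have hz := Γ.zero_measures _ hn
      have hz' := Γ.leaf_zero (Γ.root_not_nf h hl)
      constructor <;> refine ⟨fun C hC => ?_, ?_, ?_⟩
      · rw [(hz.1 C hC).1, (hz.1 C hC).2, (hz'.1 C hC).1, (hz'.1 C hC).2]
        exact ⟨le_refl _, le_refl _⟩
      · rw [hz.2.1, hz'.2.1]
      · rw [hz.2.2, hz'.2.2]
      · rw [(hz.1 C hC).1, (hz.1 C hC).2, (hz'.1 C hC).1, (hz'.1 C hC).2]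
        exact ⟨le_refl _, le_refl _⟩
      · rw [hz.2.1, hz'.2.1]
      · rw [hz.2.2, hz'.2.2]
    · push_neg at hl
      obtain ⟨c, rfl⟩ := hl
      exact ⟨Γ.dom_refl _, Γ.dom_refl _⟩

theorem Ctx.W_pos_of_not_hasNF (Γ : Ctx σ) : ∀ R : FT σ, ¬ Γ.hasNF R → 1 ≤ Γ.W R := by
  intro R
  induction R with
  | leaf c => intro h; simp only [Ctx.hasNF] at h; simp [Ctx.W, h]
  | one c T ih =>
    intro h
    simp only [Ctx.hasNF] at h
    have := ih h
    simp only [Ctx.W]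
    omega
  | two p q c T₁ T₂ ih₁ ih₂ =>
    intro _
    have := nl_pos T₁
    simp only [Ctx.W]
    omega

theorem Ctx.prune_W_le (Γ : Ctx σ) (R : FT σ) : Γ.W (Γ.prune R) ≤ Γ.W R := by
  unfold Ctx.prune
  split_ifs with h
  · exact le_refl _
  · have h1 := Γ.W_pos_of_not_hasNF R h
    have h2 : Γ.W (FT.leaf R.root) ≤ 1 := by simp only [Ctx.W]; split_ifs <;> omega
    omega

theorem Ctx.prune_L (Γ : Ctx σ) {R : FT σ} (h : R.Valid Γ.det Γ.branch) :
    Γ.L (Γ.prune R) = Γ.L R := by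
  unfold Ctx.prune
  split_ifs with hn
  · rfl
  · by_cases hl : ∀ c, R ≠ .leaf c
    · have h1 : Γ.L (FT.leaf R.root) = [] := by
        simp only [Ctx.L]; rw [if_neg (Γ.root_not_nf h hl)]
      rw [h1, (Γ.L_nil_iff _).2 hn]
    · push_neg at hl
      obtain ⟨c, rfl⟩ := hl
      rfl

end PSim

namespace PSim
variable {σ : Type}

@[simp] theorem nl_leaf (c : σ) : nl (FT.leaf c) = 1 := rfl
@[simp] theorem nl_one (c : σ) (T : FT σ) : nl (FT.one c T) = nl T := rfl
@[simp] theorem nl_two (p q : ℝ) (c : σ) (T₁ T₂ : FT σ) :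
    nl (FT.two p q c T₁ T₂) = nl T₁ + nl T₂ := rfl

theorem Ctx.W_leaf (Γ : Ctx σ) (c : σ) : Γ.W (FT.leaf c) = if Γ.NF c then 0 else 1 := rfl
theorem Ctx.W_one (Γ : Ctx σ) (c : σ) (T : FT σ) :
    Γ.W (FT.one c T) = (if Γ.kdet c T.root then 0 else nl T) + Γ.W T := rfl
theorem Ctx.W_two (Γ : Ctx σ) (p q : ℝ) (c : σ) (T₁ T₂ : FT σ) :
    Γ.W (FT.two p q c T₁ T₂) = nl T₁ + nl T₂ + Γ.W T₁ + Γ.W T₂ := rfl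

theorem Ctx.L_leaf (Γ : Ctx σ) (c : σ) :
    Γ.L (FT.leaf c) = if Γ.NF c then [0] else [] := rfl
theorem Ctx.L_one (Γ : Ctx σ) (c : σ) (T : FT σ) :
    Γ.L (FT.one c T) = (Γ.L T).map (fun e => Γ.Λ * e + Γ.rk c) := rfl
theorem Ctx.L_two (Γ : Ctx σ) (p q : ℝ) (c : σ) (T₁ T₂ : FT σ) :
    Γ.L (FT.two p q c T₁ T₂) = ((Γ.L T₁) ++ (Γ.L T₂)).map (fun e => Γ.Λ * e + Γ.rk c) := rfl

theorem Ctx.dom_one' (Γ : Ctx σ) (c : σ) (X P : FT σ) (h : Γ.Dom X P) :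
    Γ.Dom X (.one c P) :=
  ⟨fun C hC => by rw [pr_one, nc_one]; exact h.1 C hC,
   by rw [prany_one]; exact h.2.1, by rw [nany_one]; exact h.2.2⟩

theorem Ctx.dom_two_mono (Γ : Ctx σ) {p q : ℝ} (hp : 0 ≤ p) (hq : 0 ≤ q) (c c' : σ)
    {T₁ T₂ P₁ P₂ : FT σ} (h₁ : Γ.Dom T₁ P₁) (h₂ : Γ.Dom T₂ P₂) :
    Γ.Dom (.two p q c T₁ T₂) (.two p q c' P₁ P₂) := by
  refine ⟨fun C hC => ⟨?_, ?_⟩, ?_, ?_⟩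
  · rw [pr_two, pr_two]
    exact add_le_add (mul_le_mul_of_nonneg_left ((h₁.1 C hC).1) hp)
      (mul_le_mul_of_nonneg_left ((h₂.1 C hC).1) hq)
  · rw [nc_two, nc_two]
    exact add_le_add ((h₁.1 C hC).2) ((h₂.1 C hC).2)
  · rw [prany_two, prany_two]
    exact add_le_add (mul_le_mul_of_nonneg_left h₁.2.1 hp)
      (mul_le_mul_of_nonneg_left h₂.2.1 hq)
  · rw [nany_two, nany_two]
    exact add_le_add h₁.2.2 h₂.2.2

/-- The one-step projection lemma: a finite computation from `a` can be transformed
into a finite computation from `t` for any deterministic step `a → t`, without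
decreasing any of the observation measures, and decreasing the termination measure. -/
theorem Ctx.detProj (Γ : Ctx σ) : ∀ R : FT σ, R.Valid Γ.det Γ.branch →
    ∀ t, Γ.det R.root t →
    ∃ R' : FT σ, R'.Valid Γ.det Γ.branch ∧ R'.root = t ∧ Γ.Dom R R' ∧ nl R' ≤ nl R ∧
      Γ.W R' ≤ Γ.W R ∧ (Γ.W R' = Γ.W R → List.Forall₂ (· < ·) (Γ.L R') (Γ.L R)) := by
  intro R
  induction R with
  | leaf a =>
    intro _ t ht
    have hna : ¬ Γ.NF a := Γ.not_nf_of_det ht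
    have hz := Γ.leaf_zero hna
    refine ⟨.leaf t, FT.Valid.leaf t, rfl, ?_, le_refl _, ?_, ?_⟩
    · refine ⟨fun C hC => ⟨?_, ?_⟩, ?_, ?_⟩
      · rw [(hz.1 C hC).1]; simp only [FT.Pr]; split_ifs <;> norm_num
      · rw [(hz.1 C hC).2]; exact zero_le
      · rw [hz.2.1]; simp only [FT.PrAny]; split_ifs <;> norm_num
      · rw [hz.2.2]; exact zero_le
    · rw [Γ.W_leaf, Γ.W_leaf, if_neg hna]; split_ifs <;> omega
    · intro hW
      rw [Γ.W_leaf, Γ.W_leaf, if_neg hna] at hW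
      have hnt : ¬ Γ.NF t := by by_contra h; rw [if_pos h] at hW; omega
      rw [Γ.L_leaf, Γ.L_leaf, if_neg hna, if_neg hnt]
      exact List.Forall₂.nil
  | one a T IH =>
    intro hv t ht
    have hd : Γ.det a T.root := by cases hv with | one hd _ => exact hd
    have hv₁ : T.Valid Γ.det Γ.branch := by cases hv with | one _ h => exact h
    by_cases hk : Γ.kdet a T.root
    · -- commutative edge
      have hWR : Γ.W (FT.one a T) = Γ.W T := by rw [Γ.W_one, if_pos hk]; omega
      rcases ht with hnd | hkd
      · -- ndet push
        rcases Γ.hkn a T.root t hk hnd with h1 | ⟨e, h2, h3⟩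
        · -- kills the edge: project the child over `ndet T.root t`
          obtain ⟨R', hval, hroot, hdom, hnl, hW, htie⟩ := IH hv₁ t (Or.inl h1)
          refine ⟨R', hval, hroot, Γ.dom_one _ _ _ hdom, by simpa using hnl, ?_, ?_⟩
          · rw [hWR]; exact hW
          · intro hWe
            rw [hWR] at hWe
            rw [Γ.L_one]
            exact forall2_lt_map_of_forall2 (htie hWe)
              (fun e => pad_lt (Γ.Λ_pos a) (Γ.rk_pos hk))
        · obtain ⟨P, hval, hroot, hdom, hnl, hW, htie⟩ := IH hv₁ e (Or.inl h2)
          refine ⟨.one t P, FT.Valid.one (hroot ▸ Or.inr h3) hval, rfl,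
            Γ.dom_one _ _ _ (Γ.dom_one' _ _ _ hdom), by simpa using hnl, ?_, ?_⟩
          · rw [hWR, Γ.W_one, hroot, if_pos h3]
            simpa using hW
          · intro hWe
            rw [hWR, Γ.W_one, hroot, if_pos h3] at hWe
            simp only [Nat.zero_add] at hWe
            rw [Γ.L_one, Γ.L_one]
            exact forall2_map_map (htie hWe) (fun x y h => drop_lt (Γ.hΛ t) h)
      · -- kdet push
        rcases Γ.hkk a T.root t hk hkd with h1 | ⟨e, h2, h3⟩
        · refine ⟨T, hv₁, h1, Γ.dom_one _ _ _ (Γ.dom_refl _), le_refl _, le_of_eq hWR.symm, ?_⟩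
          intro _
          rw [Γ.L_one]
          exact forall2_map_right (fun e => pad_lt (Γ.Λ_pos a) (Γ.rk_pos hk))
        · obtain ⟨P, hval, hroot, hdom, hnl, hW, htie⟩ := IH hv₁ e (Or.inr h2)
          refine ⟨.one t P, FT.Valid.one (hroot ▸ Or.inr h3) hval, rfl,
            Γ.dom_one _ _ _ (Γ.dom_one' _ _ _ hdom), by simpa using hnl, ?_, ?_⟩
          · rw [hWR, Γ.W_one, hroot, if_pos h3]
            simpa using hW
          · intro hWe
            rw [hWR, Γ.W_one, hroot, if_pos h3] at hWe
            simp only [Nat.zero_add] at hWe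
            rw [Γ.L_one, Γ.L_one]
            exact forall2_map_map (htie hWe) (fun x y h => drop_lt (Γ.hΛ t) h)
    · -- non-commutative edge
      have hnd' : Γ.ndet a T.root := hd.resolve_right hk
      have hWR : Γ.W (FT.one a T) = nl T + Γ.W T := by rw [Γ.W_one, if_neg hk]
      rcases ht with hnd | hkd
      · -- ndet push
        rcases Γ.hnn a T.root t hnd' hnd with h1 | ⟨e, h2, h3⟩
        · refine ⟨T, hv₁, h1, Γ.dom_one _ _ _ (Γ.dom_refl _), le_refl _, ?_, ?_⟩
          · rw [hWR]; omega
          · intro hWe; rw [hWR] at hWe; have := nl_pos T; omega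
        · obtain ⟨P, hval, hroot, hdom, hnl, hW, htie⟩ := IH hv₁ e (Or.inl h2)
          refine ⟨.one t P, FT.Valid.one (hroot ▸ Or.inl h3) hval, rfl,
            Γ.dom_one _ _ _ (Γ.dom_one' _ _ _ hdom), by simpa using hnl, ?_, ?_⟩
          · rw [hWR, Γ.W_one]
            have : (if Γ.kdet t P.root then 0 else nl P) ≤ nl P := by split_ifs <;> omega
            omega
          · intro hWe
            rw [hWR, Γ.W_one] at hWe
            by_cases hk2 : Γ.kdet t P.root
            · rw [if_pos hk2] at hWe; have := nl_pos T; omega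
            · rw [if_neg hk2] at hWe
              have h4 : nl P = nl T ∧ Γ.W P = Γ.W T := by omega
              rw [Γ.L_one, Γ.L_one]
              exact forall2_map_map (htie h4.2) (fun x y h => drop_lt (Γ.hΛ t) h)
      · -- kdet push
        rcases Γ.hkn a t T.root hkd hnd' with h1 | ⟨e, h2, h3⟩
        · refine ⟨.one t T, FT.Valid.one (Or.inl h1) hv₁, rfl,
            Γ.dom_one _ _ _ (Γ.dom_one' _ _ _ (Γ.dom_refl _)), le_refl _, ?_, ?_⟩
          · rw [hWR, Γ.W_one]
            have : (if Γ.kdet t T.root then 0 else nl T) ≤ nl T := by split_ifs <;> omega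
            omega
          · intro hWe
            rw [hWR, Γ.W_one] at hWe
            by_cases hk2 : Γ.kdet t T.root
            · rw [if_pos hk2] at hWe; have := nl_pos T; omega
            · rw [Γ.L_one, Γ.L_one]
              exact forall2_map_both (fun e => add_lt_add_right (Γ.hrk a t hkd) _)
        · obtain ⟨P, hval, hroot, hdom, hnl, hW, htie⟩ := IH hv₁ e (Or.inr h3)
          refine ⟨.one t P, FT.Valid.one (hroot ▸ Or.inl h2) hval, rfl,
            Γ.dom_one _ _ _ (Γ.dom_one' _ _ _ hdom), by simpa using hnl, ?_, ?_⟩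
          · rw [hWR, Γ.W_one]
            have : (if Γ.kdet t P.root then 0 else nl P) ≤ nl P := by split_ifs <;> omega
            omega
          · intro hWe
            rw [hWR, Γ.W_one] at hWe
            by_cases hk2 : Γ.kdet t P.root
            · rw [if_pos hk2] at hWe; have := nl_pos T; omega
            · rw [if_neg hk2] at hWe
              have h4 : nl P = nl T ∧ Γ.W P = Γ.W T := by omega
              rw [Γ.L_one, Γ.L_one]
              exact forall2_map_map (htie h4.2) (fun x y h => drop_lt (Γ.hΛ t) h)
  | two p q a T₁ T₂ IH₁ IH₂ =>
    intro hv t ht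
    have hb : Γ.branch a (p, T₁.root) (q, T₂.root) := by cases hv with | two hb _ _ => exact hb
    have hv₁ : T₁.Valid Γ.det Γ.branch := by cases hv with | two _ h _ => exact h
    have hv₂ : T₂.Valid Γ.det Γ.branch := by cases hv with | two _ _ h => exact h
    obtain ⟨hp, hq, _⟩ := Γ.hsum _ _ _ _ _ hb
    have key : ∃ c' d', Γ.branch t (p, c') (q, d') ∧ Γ.det T₁.root c' ∧ Γ.det T₂.root d' := by
      rcases ht with hnd | hkd
      · obtain ⟨c', d', hb', h₁, h₂⟩ := Γ.hnm a t p T₁.root q T₂.root hnd hb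
        exact ⟨c', d', hb', h₁, h₂⟩
      · obtain ⟨c', d', hb', h₁, h₂⟩ := Γ.hkm a t p T₁.root q T₂.root hkd hb
        exact ⟨c', d', hb', Or.inr h₁, Or.inr h₂⟩
    obtain ⟨c', d', hb', hs₁, hs₂⟩ := key
    obtain ⟨P₁, hval₁, hroot₁, hdom₁, hnl₁, hW₁, htie₁⟩ := IH₁ hv₁ c' hs₁
    obtain ⟨P₂, hval₂, hroot₂, hdom₂, hnl₂, hW₂, htie₂⟩ := IH₂ hv₂ d' hs₂
    refine ⟨.two p q t P₁ P₂, FT.Valid.two (by rw [hroot₁, hroot₂]; exact hb') hval₁ hval₂,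
      rfl, Γ.dom_two_mono hp hq a t hdom₁ hdom₂, by simp only [nl_two]; omega, ?_, ?_⟩
    · rw [Γ.W_two, Γ.W_two]; omega
    · intro hWe
      rw [Γ.W_two, Γ.W_two] at hWe
      have h4 : Γ.W P₁ = Γ.W T₁ ∧ Γ.W P₂ = Γ.W T₂ := by omega
      rw [Γ.L_two, Γ.L_two]
      exact forall2_map_map (forall2_append (htie₁ h4.1) (htie₂ h4.2))
        (fun x y h => drop_lt (Γ.hΛ t) h)
end PSim

namespace PSim
variable {σ : Type}

/-- The branch projection lemma: a finite computation from `a` can be projected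
over a probabilistic branching of `a`, yielding a weighted pair of computations. -/
theorem Ctx.branchProj (Γ : Ctx σ) : ∀ R : FT σ, R.Valid Γ.det Γ.branch →
    ∀ s₀ t₀ s₁ t₁, Γ.branch R.root (s₀, t₀) (s₁, t₁) →
    ∃ R'₀ R'₁ : FT σ, R'₀.Valid Γ.det Γ.branch ∧ R'₁.Valid Γ.det Γ.branch ∧
      R'₀.root = t₀ ∧ R'₁.root = t₁ ∧
      (∀ C, Γ.NF C → FT.Pr C R ≤ s₀ * FT.Pr C R'₀ + s₁ * FT.Pr C R'₁ ∧
        FT.Nc C R ≤ FT.Nc C R'₀ + FT.Nc C R'₁) ∧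
      FT.PrAny Γ.NF R ≤ s₀ * FT.PrAny Γ.NF R'₀ + s₁ * FT.PrAny Γ.NF R'₁ ∧
      FT.NAny Γ.NF R ≤ FT.NAny Γ.NF R'₀ + FT.NAny Γ.NF R'₁ ∧
      nl R'₀ ≤ nl R ∧ nl R'₁ ≤ nl R ∧
      Γ.W R'₀ ≤ Γ.W R ∧ Γ.W R'₁ ≤ Γ.W R ∧
      (Γ.hasNF R → Γ.W R'₀ < Γ.W R ∧ Γ.W R'₁ < Γ.W R) := by
  intro R
  induction R with
  | leaf a =>
    intro _ s₀ t₀ s₁ t₁ hbr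
    have hna : ¬ Γ.NF a := Γ.not_nf_of_branch hbr
    have hz := Γ.leaf_zero hna
    obtain ⟨hs₀, hs₁, _⟩ := Γ.hsum _ _ _ _ _ hbr
    have hind : ∀ x : σ, (0:ℝ) ≤ FT.Pr x (FT.leaf t₀) ∧ (0:ℝ) ≤ FT.Pr x (FT.leaf t₁) := by
      intro x; constructor <;> (simp only [FT.Pr]; split_ifs <;> norm_num)
    have hind' : (0:ℝ) ≤ FT.PrAny Γ.NF (FT.leaf t₀) ∧ (0:ℝ) ≤ FT.PrAny Γ.NF (FT.leaf t₁) := by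
      constructor <;> (simp only [FT.PrAny]; split_ifs <;> norm_num)
    refine ⟨.leaf t₀, .leaf t₁, FT.Valid.leaf _, FT.Valid.leaf _, rfl, rfl, ?_, ?_, ?_,
      le_refl _, le_refl _, ?_, ?_, ?_⟩
    · intro C hC
      constructor
      · rw [(hz.1 C hC).1]
        exact add_nonneg (mul_nonneg hs₀ (hind C).1) (mul_nonneg hs₁ (hind C).2)
      · rw [(hz.1 C hC).2]; exact zero_le
    · rw [hz.2.1]
      exact add_nonneg (mul_nonneg hs₀ hind'.1) (mul_nonneg hs₁ hind'.2)
    · rw [hz.2.2]; exact zero_le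
    · rw [Γ.W_leaf, Γ.W_leaf, if_neg hna]; split_ifs <;> omega
    · rw [Γ.W_leaf, Γ.W_leaf, if_neg hna]; split_ifs <;> omega
    · intro h; exact absurd h hna
  | one a T IH =>
    intro hv s₀ t₀ s₁ t₁ hbr
    have hd : Γ.det a T.root := by cases hv with | one hd _ => exact hd
    have hv₁ : T.Valid Γ.det Γ.branch := by cases hv with | one _ h => exact h
    by_cases hk : Γ.kdet a T.root
    · -- commutative edge: the pushed steps are commutative as well
      obtain ⟨c', d', hb', h₁, h₂⟩ := Γ.hkm a T.root s₀ t₀ s₁ t₁ hk hbr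
      obtain ⟨A₀, A₁, hva₀, hva₁, hr₀, hr₁, hm, hpa, hna', hnl₀, hnl₁, hW₀, hW₁, hstr⟩ :=
        IH hv₁ s₀ c' s₁ d' hb'
      have hWR : Γ.W (FT.one a T) = Γ.W T := by rw [Γ.W_one, if_pos hk]; omega
      have e₀ : Γ.W (FT.one t₀ A₀) = Γ.W A₀ := by
        rw [Γ.W_one, hr₀, if_pos h₁]; omega
      have e₁ : Γ.W (FT.one t₁ A₁) = Γ.W A₁ := by
        rw [Γ.W_one, hr₁, if_pos h₂]; omega
      refine ⟨.one t₀ A₀, .one t₁ A₁, FT.Valid.one (hr₀ ▸ Or.inr h₁) hva₀,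
        FT.Valid.one (hr₁ ▸ Or.inr h₂) hva₁, rfl, rfl, ?_, ?_, ?_, ?_, ?_, ?_, ?_, ?_⟩
      · intro C hC
        rw [pr_one, pr_one, pr_one, nc_one, nc_one, nc_one]
        exact hm C hC
      · rw [prany_one, prany_one, prany_one]; exact hpa
      · rw [nany_one, nany_one, nany_one]; exact hna'
      · simpa using hnl₀
      · simpa using hnl₁
      · rw [hWR, e₀]; exact hW₀
      · rw [hWR, e₁]; exact hW₁
      · intro h
        have := hstr h
        rw [hWR, e₀, e₁]
        omega
    · have hnd' : Γ.ndet a T.root := hd.resolve_right hk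
      have hWR : Γ.W (FT.one a T) = nl T + Γ.W T := by rw [Γ.W_one, if_neg hk]
      obtain ⟨c', d', hb', h₁, h₂⟩ := Γ.hnm a T.root s₀ t₀ s₁ t₁ hnd' hbr
      obtain ⟨A₀, A₁, hva₀, hva₁, hr₀, hr₁, hm, hpa, hna', hnl₀, hnl₁, hW₀, hW₁, hstr⟩ :=
        IH hv₁ s₀ c' s₁ d' hb'
      have e₀ : Γ.W (FT.one t₀ A₀) ≤ nl A₀ + Γ.W A₀ := by
        rw [Γ.W_one]; split_ifs <;> omega
      have e₁ : Γ.W (FT.one t₁ A₁) ≤ nl A₁ + Γ.W A₁ := by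
        rw [Γ.W_one]; split_ifs <;> omega
      refine ⟨.one t₀ A₀, .one t₁ A₁, FT.Valid.one (hr₀ ▸ h₁) hva₀,
        FT.Valid.one (hr₁ ▸ h₂) hva₁, rfl, rfl, ?_, ?_, ?_, ?_, ?_, ?_, ?_, ?_⟩
      · intro C hC
        rw [pr_one, pr_one, pr_one, nc_one, nc_one, nc_one]
        exact hm C hC
      · rw [prany_one, prany_one, prany_one]; exact hpa
      · rw [nany_one, nany_one, nany_one]; exact hna'
      · simpa using hnl₀
      · simpa using hnl₁
      · rw [hWR]; omega
      · rw [hWR]; omega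
      · intro h
        have := hstr h
        rw [hWR]
        omega
  | two p q a T₁ T₂ IH₁ IH₂ =>
    intro hv s₀ t₀ s₁ t₁ hbr
    have hb : Γ.branch a (p, T₁.root) (q, T₂.root) := by cases hv with | two hb _ _ => exact hb
    have hv₁ : T₁.Valid Γ.det Γ.branch := by cases hv with | two _ h _ => exact h
    have hv₂ : T₂.Valid Γ.det Γ.branch := by cases hv with | two _ _ h => exact h
    obtain ⟨hp, hq, _⟩ := Γ.hsum _ _ _ _ _ hb
    rcases Γ.hmm a p T₁.root q T₂.root s₀ t₀ s₁ t₁ hb hbr with ⟨h1, h2⟩ | hjoin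
    · -- the two branchings agree
      have hps : p = s₀ := congrArg Prod.fst h1
      have hrt₀ : T₁.root = t₀ := congrArg Prod.snd h1
      have hqs : q = s₁ := congrArg Prod.fst h2
      have hrt₁ : T₂.root = t₁ := congrArg Prod.snd h2
      have h2' := nl_pos T₁
      have h3' := nl_pos T₂
      refine ⟨T₁, T₂, hv₁, hv₂, hrt₀, hrt₁, ?_, ?_, ?_, ?_, ?_, ?_, ?_, ?_⟩
      · intro C hC
        rw [pr_two, nc_two, hps, hqs]
        exact ⟨le_refl _, le_refl _⟩
      · rw [prany_two, hps, hqs]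
      · rw [nany_two]
      · simp only [nl_two]; omega
      · simp only [nl_two]; omega
      · rw [Γ.W_two]; omega
      · rw [Γ.W_two]; omega
      · intro _; rw [Γ.W_two]; omega
    · obtain ⟨d, tt, u, hb₀, hb₁, hc₀, hc₁, hkey⟩ := hjoin
      obtain ⟨ht00, ht01, _⟩ := Γ.hsum _ _ _ _ _ hb₀
      obtain ⟨ht10, ht11, _⟩ := Γ.hsum _ _ _ _ _ hb₁
      obtain ⟨A₀, A₁, hva₀, hva₁, hra₀, hra₁, hmA, hpaA, hnaA, hnlA₀, hnlA₁, hWA₀, hWA₁, hstrA⟩ :=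
        IH₁ hv₁ (tt false false) (d false false) (tt false true) (d false true) hb₀
      obtain ⟨B₀, B₁, hvb₀, hvb₁, hrb₀, hrb₁, hmB, hpaB, hnaB, hnlB₀, hnlB₁, hWB₀, hWB₁, hstrB⟩ :=
        IH₂ hv₂ (tt true false) (d true false) (tt true true) (d true true) hb₁
      have e1 : p * tt false false = s₀ * u false false := by simpa using hkey false false
      have e2 : p * tt false true = s₁ * u false true := by simpa using hkey false true
      have e3 : q * tt true false = s₀ * u true false := by simpa using hkey true false
      have e4 : q * tt true true = s₁ * u true true := by simpa using hkey true true
      refine ⟨.two (u false false) (u true false) t₀ A₀ B₀,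
        .two (u false true) (u true true) t₁ A₁ B₁,
        FT.Valid.two (by rw [hra₀, hrb₀]; exact hc₀) hva₀ hvb₀,
        FT.Valid.two (by rw [hra₁, hrb₁]; exact hc₁) hva₁ hvb₁,
        rfl, rfl, ?_, ?_, ?_, ?_, ?_, ?_, ?_, ?_⟩
      · intro C hC
        constructor
        · rw [pr_two, pr_two, pr_two]
          have hA := (hmA C hC).1
          have hB := (hmB C hC).1
          calc p * FT.Pr C T₁ + q * FT.Pr C T₂
              ≤ p * (tt false false * FT.Pr C A₀ + tt false true * FT.Pr C A₁) +
                q * (tt true false * FT.Pr C B₀ + tt true true * FT.Pr C B₁) :=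
                add_le_add (mul_le_mul_of_nonneg_left hA hp) (mul_le_mul_of_nonneg_left hB hq)
            _ = s₀ * (u false false * FT.Pr C A₀ + u true false * FT.Pr C B₀) +
                s₁ * (u false true * FT.Pr C A₁ + u true true * FT.Pr C B₁) := by
                linear_combination (FT.Pr C A₀) * e1 + (FT.Pr C A₁) * e2 +
                  (FT.Pr C B₀) * e3 + (FT.Pr C B₁) * e4
        · rw [nc_two, nc_two, nc_two]
          calc FT.Nc C T₁ + FT.Nc C T₂
              ≤ (FT.Nc C A₀ + FT.Nc C A₁) + (FT.Nc C B₀ + FT.Nc C B₁) :=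
                add_le_add (hmA C hC).2 (hmB C hC).2
            _ = (FT.Nc C A₀ + FT.Nc C B₀) + (FT.Nc C A₁ + FT.Nc C B₁) := by
                rw [add_add_add_comm]
      · rw [prany_two, prany_two, prany_two]
        calc p * FT.PrAny Γ.NF T₁ + q * FT.PrAny Γ.NF T₂
            ≤ p * (tt false false * FT.PrAny Γ.NF A₀ + tt false true * FT.PrAny Γ.NF A₁) +
              q * (tt true false * FT.PrAny Γ.NF B₀ + tt true true * FT.PrAny Γ.NF B₁) :=
              add_le_add (mul_le_mul_of_nonneg_left hpaA hp) (mul_le_mul_of_nonneg_left hpaB hq)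
          _ = s₀ * (u false false * FT.PrAny Γ.NF A₀ + u true false * FT.PrAny Γ.NF B₀) +
              s₁ * (u false true * FT.PrAny Γ.NF A₁ + u true true * FT.PrAny Γ.NF B₁) := by
              linear_combination (FT.PrAny Γ.NF A₀) * e1 + (FT.PrAny Γ.NF A₁) * e2 +
                (FT.PrAny Γ.NF B₀) * e3 + (FT.PrAny Γ.NF B₁) * e4
      · rw [nany_two, nany_two, nany_two]
        calc FT.NAny Γ.NF T₁ + FT.NAny Γ.NF T₂
            ≤ (FT.NAny Γ.NF A₀ + FT.NAny Γ.NF A₁) + (FT.NAny Γ.NF B₀ + FT.NAny Γ.NF B₁) :=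
              add_le_add hnaA hnaB
          _ = (FT.NAny Γ.NF A₀ + FT.NAny Γ.NF B₀) + (FT.NAny Γ.NF A₁ + FT.NAny Γ.NF B₁) := by
              rw [add_add_add_comm]
      · simp only [nl_two]; omega
      · simp only [nl_two]; omega
      · rw [Γ.W_two, Γ.W_two]; omega
      · rw [Γ.W_two, Γ.W_two]; omega
      · intro h
        rw [Γ.W_two, Γ.W_two, Γ.W_two]
        rcases h with h | h
        · have := hstrA h; omega
        · have := hstrB h; omega
end PSim

namespace PSim
variable {σ : Type}

theorem child_valid {det : σ → σ → Prop} {branch : σ → ℝ × σ → ℝ × σ → Prop}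
    {T : PT σ} (hv : T.Valid det branch) {b : Bool} (hb : (T.label [b]).isSome) :
    (T.child b).Valid det branch := by
  refine ⟨hb, ?_, ?_, ?_, ?_, ?_⟩
  · intro l h
    have := hv.none_child (b :: l) h
    simpa [PT.child, List.cons_append] using this
  · intro l h
    have := hv.right_imp_left (b :: l) (by simpa [PT.child, List.cons_append] using h)
    simpa [PT.child, List.cons_append] using this
  · intro l c d h1 h2 h3
    have := hv.det_step (b :: l) c d h1 (by simpa [PT.child, List.cons_append] using h2)
      (by simpa [PT.child, List.cons_append] using h3)
    simpa [PT.child, List.cons_append] using this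
  · intro l c h1 h2
    have := hv.branch_step (b :: l) c h1 (by simpa [PT.child] using h2)
    simpa [PT.child, List.cons_append] using this
  · intro l h
    have := hv.pr_of_two (b :: l) (by simpa [PT.child, List.cons_append] using h)
    simpa [PT.child] using this

theorem child_maximal {NFp : σ → Prop} {T : PT σ} (hm : T.Maximal NFp) (b : Bool) :
    (T.child b).Maximal NFp := by
  intro l c h1 h2
  exact hm (b :: l) c h1 (by simpa [PT.child, List.cons_append] using h2)

/-- The main simulation lemma, proved by well-founded induction on the measure
`(W, E)` ordered lexicographically. -/
theorem Ctx.main (Γ : Ctx σ) : ∀ (w : ℕ) (ε : Ordinal.{0}) (R : FT σ),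
    Γ.W R = w → Γ.E R = ε → R.Valid Γ.det Γ.branch →
    ((∃ c, R = .leaf c) ∨ Γ.hasNF R) →
    ∀ T : PT σ, T.Valid Γ.det Γ.branch → T.Maximal Γ.NF → T.label [] = some R.root →
    ∃ G : FT σ, SubComp G T ∧ Γ.Dom R G := by
  intro w
  induction w using Nat.strong_induction_on with
  | _ w IHw =>
  intro ε
  induction ε using Ordinal.induction with
  | h ε IHe =>
  intro R hW hE hv hP0 T hvT hmT hroot
  by_cases hLf : ∃ c, R = FT.leaf c
  · obtain ⟨c, rfl⟩ := hLf
    exact ⟨.leaf c, SubComp.leaf hroot, Γ.dom_refl _⟩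
  · push_neg at hLf
    have hNF : Γ.hasNF R := hP0.resolve_left (by
      intro ⟨c, hc⟩; exact hLf c hc)
    have hnroot : ¬ Γ.NF R.root := Γ.root_not_nf hv hLf
    have hfalse : (T.label [false]).isSome := by
      by_contra h
      have hnone : T.label ([] ++ [false]) = none := by
        simpa using Option.not_isSome_iff_eq_none.1 h
      exact hnroot (hmT [] R.root hroot hnone)
    obtain ⟨c₁, h1⟩ := Option.isSome_iff_exists.1 hfalse
    have hLne : Γ.L R ≠ [] := fun h => (Γ.L_nil_iff R).1 h hNF
    rcases hpr : T.pr [] with _ | pq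
    · -- deterministic step at the root of T
      have htrue : T.label [true] = none := by
        by_contra h
        have h' : (T.label ([] ++ [true])).isSome := by
          simpa using Option.ne_none_iff_isSome.1 h
        have := hvT.pr_of_two [] h'
        rw [hpr] at this
        simp at this
      obtain ⟨-, hdet⟩ := hvT.det_step [] R.root c₁ hroot
        (by simpa using h1) htrue
      obtain ⟨R', hval', hroot', hdom', hnl', hW', htie'⟩ := Γ.detProj R hv c₁ hdet
      have hWle : Γ.W (Γ.prune R') ≤ Γ.W R' := Γ.prune_W_le R'
      have hlbl : (T.child false).label [] = some ((Γ.prune R').root) := by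
        rw [Γ.prune_root, hroot']
        exact h1
      have hrec : ∃ G', SubComp G' (T.child false) ∧ Γ.Dom (Γ.prune R') G' := by
        rcases lt_or_eq_of_le (le_trans hWle hW') with hlt | heq
        · exact IHw (Γ.W (Γ.prune R')) (by omega) (Γ.E (Γ.prune R')) (Γ.prune R') rfl rfl
            (Γ.prune_valid hval') (Γ.P0_prune R') (T.child false)
            (child_valid hvT hfalse) (child_maximal hmT false) hlbl
        · have hW'eq : Γ.W R' = Γ.W R := le_antisymm hW' (heq ▸ hWle)
          have hE' : Γ.E R' < Γ.E R := foldr_nadd_lt (htie' hW'eq) hLne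
          have hEpr : Γ.E (Γ.prune R') = Γ.E R' := by
            unfold Ctx.E
            rw [Γ.prune_L hval']
          exact IHe (Γ.E (Γ.prune R')) (by rw [hEpr, ← hE]; exact hE') (Γ.prune R')
            (by rw [heq, hW]) rfl (Γ.prune_valid hval') (Γ.P0_prune R') (T.child false)
            (child_valid hvT hfalse) (child_maximal hmT false) hlbl
      obtain ⟨G', hsub', hdom''⟩ := hrec
      refine ⟨.one R.root G', SubComp.one hroot hpr hfalse htrue hsub', ?_⟩
      exact Γ.dom_one' _ _ _
        (Γ.dom_trans (Γ.dom_trans hdom' (Γ.prune_dom hval').1) hdom'')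
    · -- probabilistic step at the root of T
      obtain ⟨p', q', dd, ee, hpr', hd, he, hbr⟩ := hvT.branch_step [] R.root hroot
        (by rw [hpr]; rfl)
      obtain ⟨hp', hq', -⟩ := Γ.hsum _ _ _ _ _ hbr
      obtain ⟨R'₀, R'₁, hv0, hv1, hr0, hr1, hm', hpa', hna', hnl0, hnl1, hW0, hW1, hstr⟩ :=
        Γ.branchProj R hv p' dd q' ee hbr
      have hstrict := hstr hNF
      have hd' : T.label [false] = some dd := by simpa using hd
      have he' : T.label [true] = some ee := by simpa using he
      have htruesome : (T.label [true]).isSome := by rw [he']; rfl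
      have hlbl₀ : (T.child false).label [] = some ((Γ.prune R'₀).root) := by
        rw [Γ.prune_root, hr0]; exact hd'
      have hlbl₁ : (T.child true).label [] = some ((Γ.prune R'₁).root) := by
        rw [Γ.prune_root, hr1]; exact he'
      obtain ⟨G₀, hsub₀, hdom₀⟩ := IHw (Γ.W (Γ.prune R'₀))
        (by have := Γ.prune_W_le R'₀; omega) (Γ.E (Γ.prune R'₀)) (Γ.prune R'₀) rfl rfl
        (Γ.prune_valid hv0) (Γ.P0_prune R'₀) (T.child false)
        (child_valid hvT hfalse) (child_maximal hmT false) hlbl₀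
      obtain ⟨G₁, hsub₁, hdom₁⟩ := IHw (Γ.W (Γ.prune R'₁))
        (by have := Γ.prune_W_le R'₁; omega) (Γ.E (Γ.prune R'₁)) (Γ.prune R'₁) rfl rfl
        (Γ.prune_valid hv1) (Γ.P0_prune R'₁) (T.child true)
        (child_valid hvT htruesome) (child_maximal hmT true) hlbl₁
      have hdchain₀ : Γ.Dom R'₀ G₀ := Γ.dom_trans (Γ.prune_dom hv0).1 hdom₀
      have hdchain₁ : Γ.Dom R'₁ G₁ := Γ.dom_trans (Γ.prune_dom hv1).1 hdom₁
      refine ⟨.two p' q' R.root G₀ G₁, SubComp.two hroot hpr' hsub₀ hsub₁, ?_, ?_, ?_⟩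
      · intro C hC
        constructor
        · rw [pr_two]
          calc FT.Pr C R ≤ p' * FT.Pr C R'₀ + q' * FT.Pr C R'₁ := (hm' C hC).1
            _ ≤ p' * FT.Pr C G₀ + q' * FT.Pr C G₁ :=
                add_le_add (mul_le_mul_of_nonneg_left (hdchain₀.1 C hC).1 hp')
                  (mul_le_mul_of_nonneg_left (hdchain₁.1 C hC).1 hq')
        · rw [nc_two]
          calc FT.Nc C R ≤ FT.Nc C R'₀ + FT.Nc C R'₁ := (hm' C hC).2
            _ ≤ FT.Nc C G₀ + FT.Nc C G₁ :=
                add_le_add (hdchain₀.1 C hC).2 (hdchain₁.1 C hC).2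
      · rw [prany_two]
        calc FT.PrAny Γ.NF R ≤ p' * FT.PrAny Γ.NF R'₀ + q' * FT.PrAny Γ.NF R'₁ := hpa'
          _ ≤ p' * FT.PrAny Γ.NF G₀ + q' * FT.PrAny Γ.NF G₁ :=
              add_le_add (mul_le_mul_of_nonneg_left hdchain₀.2.1 hp')
                (mul_le_mul_of_nonneg_left hdchain₁.2.1 hq')
      · rw [nany_two]
        calc FT.NAny Γ.NF R ≤ FT.NAny Γ.NF R'₀ + FT.NAny Γ.NF R'₁ := hna'
          _ ≤ FT.NAny Γ.NF G₀ + FT.NAny Γ.NF G₁ := add_le_add hdchain₀.2.2 hdchain₁.2.2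

end PSim


/-- Simulation of finite computations by maximal ones: every finite probabilistic
computation with the same root as a maximal one is dominated by one of its finite
sub-computations. -/
theorem simulation
    (ndet kdet : σ → σ → Prop) (branch : σ → ℝ × σ → ℝ × σ → Prop)
    (hsum : ∀ a p b q c, branch a (p, b) (q, c) → 0 ≤ p ∧ 0 ≤ q ∧ p + q = 1)
    (hkk : ∀ a b c, kdet a b → kdet a c → b = c ∨ ∃ d, kdet b d ∧ kdet c d)
    (hkn : ∀ a b c, kdet a b → ndet a c → ndet b c ∨ ∃ d, ndet b d ∧ kdet c d)
    (hkm : ∀ a b p c q d, kdet a b → branch a (p, c) (q, d) →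
      ∃ c' d', branch b (p, c') (q, d') ∧ kdet c c' ∧ kdet d d')
    (hnn : ∀ a b c, ndet a b → ndet a c → b = c ∨ ∃ d, ndet b d ∧ ndet c d)
    (hnm : ∀ a b p c q d, ndet a b → branch a (p, c) (q, d) →
      ∃ c' d', branch b (p, c') (q, d') ∧ (ndet c c' ∨ kdet c c') ∧
        (ndet d d' ∨ kdet d d'))
    (hmm : ∀ a p₀ b₀ p₁ b₁ s₀ c₀ s₁ c₁,
      branch a (p₀, b₀) (p₁, b₁) → branch a (s₀, c₀) (s₁, c₁) →
      ((p₀, b₀) = (s₀, c₀) ∧ (p₁, b₁) = (s₁, c₁)) ∨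
      ∃ (d : Bool → Bool → σ) (t u : Bool → Bool → ℝ),
        branch b₀ (t false false, d false false) (t false true, d false true) ∧
        branch b₁ (t true false, d true false) (t true true, d true true) ∧
        branch c₀ (u false false, d false false) (u true false, d true false) ∧
        branch c₁ (u false true, d false true) (u true true, d true true) ∧
        ∀ i j, (bif i then p₁ else p₀) * t i j = (bif j then s₁ else s₀) * u i j)
    (hsn : ¬ ∃ f : ℕ → σ, ∀ n : ℕ, kdet (f n) (f (n + 1)))
    (T : PT σ) (F : FT σ)
    (hv : T.Valid (fun a b => ndet a b ∨ kdet a b) branch)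
    (hm : T.Maximal (IsNF (fun a b => ndet a b ∨ kdet a b) branch))
    (hvF : F.Valid (fun a b => ndet a b ∨ kdet a b) branch)
    (hroot : T.label [] = some F.root) :
    ∃ G : FT σ, SubComp G T ∧
      (∀ C, IsNF (fun a b => ndet a b ∨ kdet a b) branch C →
        FT.Pr C F ≤ FT.Pr C G ∧ FT.Nc C F ≤ FT.Nc C G) ∧
      FT.PrAny (IsNF (fun a b => ndet a b ∨ kdet a b) branch) F
        ≤ FT.PrAny (IsNF (fun a b => ndet a b ∨ kdet a b) branch) G ∧
      FT.NAny (IsNF (fun a b => ndet a b ∨ kdet a b) branch) F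
        ≤ FT.NAny (IsNF (fun a b => ndet a b ∨ kdet a b) branch) G := by
  have hwf : WellFounded (fun a b => kdet b a) := PSim.wf_of_no_chain hsn
  let Γ : PSim.Ctx σ :=
    { ndet := ndet, kdet := kdet, branch := branch,
      rk := fun x => (hwf.apply x).rank, Λ := Ordinal.lsub fun x : σ => (hwf.apply x).rank,
      hrk := fun a b h => Acc.rank_lt_of_rel (hwf.apply a) (show (fun a b => kdet b a) b a from h),
      hΛ := fun a => Ordinal.lt_lsub _ a,
      hsum := hsum, hkk := hkk, hkn := hkn, hkm := hkm, hnn := hnn, hnm := hnm,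
      hmm := hmm }
  have hvT' : T.Valid Γ.det Γ.branch := hv
  have hmT' : T.Maximal Γ.NF := hm
  have hvF' : F.Valid Γ.det Γ.branch := hvF
  obtain ⟨G, hsub, hdom⟩ := Γ.main (Γ.W (Γ.prune F)) (Γ.E (Γ.prune F)) (Γ.prune F) rfl rfl
    (Γ.prune_valid hvF') (Γ.P0_prune F) T hvT' hmT'
    (by rw [Γ.prune_root]; exact hroot)
  have hdomF : Γ.Dom F G := Γ.dom_trans (Γ.prune_dom hvF').1 hdom
  exact ⟨G, hsub, hdomF.1, hdomF.2.1, hdomF.2.2⟩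
end
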